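/- arXiv:2104.04773 — 6 statements merged into one kernel-verified Lean document; each statement's English description precedes it below -/
import Mathlib

section
/- Let (Ω, ℱ, Q) be a probability space, 𝒢 ⊆ ℱ a sub-σ-algebra, L : Ω → [0,∞) a Q-integrable function with ∫ L dQ = 1, and let P be the probability measure with density L with respect to Q (that is, P = Q.withDensity L). Then for every f : Ω → ℝ that is P-integrable, the Bayes formula holds Q-almost everywhere: E^P[f | 𝒢] · E^Q[L | 𝒢] = E^Q[f·L | 𝒢]. -/
open MeasureTheory ProbabilityTheory
open scoped ENNReal NNReal

theorem bayes_aux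
    {Ω : Type*} (𝒢 : MeasurableSpace Ω) {mΩ : MeasurableSpace Ω} {Q : Measure Ω}
    [IsProbabilityMeasure Q]
    (L : Ω → ℝ) (hL_nonneg : ∀ ω, 0 ≤ L ω) (hL_int : Integrable L Q)
    (hL_one : ∫ ω, L ω ∂Q = 1)
    (P : Measure Ω) (hP : P = Q.withDensity (fun ω => ENNReal.ofReal (L ω)))
    (h𝒢 : 𝒢 ≤ mΩ)
    (f : Ω → ℝ) (hf : Integrable f P) :
    ∀ᵐ ω ∂Q, (P[f|𝒢]) ω * (Q[L|𝒢]) ω = (Q[fun ω => f ω * L ω|𝒢]) ω := by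
  have hL_ae : AEMeasurable (fun ω => (L ω).toNNReal) Q :=
    measurable_real_toNNReal.comp_aemeasurable hL_int.aemeasurable
  have hP' : P = Q.withDensity (fun ω => ((L ω).toNNReal : ℝ≥0∞)) := by
    rw [hP]; rfl
  have hPprob : IsProbabilityMeasure P := by
    constructor
    rw [hP, withDensity_apply _ MeasurableSet.univ, Measure.restrict_univ,
      ← MeasureTheory.ofReal_integral_eq_lintegral_ofReal hL_int (Filter.Eventually.of_forall hL_nonneg),
      hL_one, ENNReal.ofReal_one]
  set g := P[f|𝒢] with hg
  -- integrability of g * L under Q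
  have hgP : Integrable g P := integrable_condExp
  have hgL_int : Integrable (fun ω => g ω * L ω) Q := by
    rw [hP', integrable_withDensity_iff_integrable_smul₀ hL_ae] at hgP
    refine hgP.congr (Filter.Eventually.of_forall fun ω => ?_)
    simp [NNReal.smul_def, Real.coe_toNNReal _ (hL_nonneg ω), mul_comm]
  have hfL_int : Integrable (fun ω => f ω * L ω) Q := by
    have := hf
    rw [hP', integrable_withDensity_iff_integrable_smul₀ hL_ae] at this
    refine this.congr (Filter.Eventually.of_forall fun ω => ?_)
    simp [NNReal.smul_def, Real.coe_toNNReal _ (hL_nonneg ω), mul_comm]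
  -- pull-out property
  have h_pull : Q[fun ω => g ω * L ω|𝒢] =ᵐ[Q] g * Q[L|𝒢] :=
    condExp_mul_of_stronglyMeasurable_left stronglyMeasurable_condExp hgL_int hL_int
  -- transfer of set integrals from P to Q
  have h_transfer : ∀ (h : Ω → ℝ) (s : Set Ω), MeasurableSet[mΩ] s →
      ∫ ω in s, h ω ∂P = ∫ ω in s, h ω * L ω ∂Q := by
    intro h s hs
    rw [hP']
    rw [show (Q.withDensity fun ω => ((L ω).toNNReal : ℝ≥0∞)).restrict s
      = (Q.restrict s).withDensity (fun ω => ((L ω).toNNReal : ℝ≥0∞)) from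
      restrict_withDensity hs _]
    rw [integral_withDensity_eq_integral_smul₀ hL_ae.restrict]
    refine integral_congr_ae (Filter.Eventually.of_forall fun ω => ?_)
    simp [NNReal.smul_def, Real.coe_toNNReal _ (hL_nonneg ω), mul_comm]
  -- uniqueness of conditional expectation
  have h_main : g * Q[L|𝒢] =ᵐ[Q] Q[fun ω => f ω * L ω|𝒢] := by
    refine ae_eq_condExp_of_forall_setIntegral_eq h𝒢 hfL_int
      (fun s _ _ => (integrable_condExp.congr h_pull).integrableOn)
      (fun s hs _ => ?_)
      (StronglyMeasurable.aestronglyMeasurable (stronglyMeasurable_condExp.mul stronglyMeasurable_condExp))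
    have hs' : MeasurableSet[mΩ] s := h𝒢 s hs
    calc ∫ ω in s, (g * Q[L|𝒢]) ω ∂Q
        = ∫ ω in s, (Q[fun ω => g ω * L ω|𝒢]) ω ∂Q :=
          setIntegral_congr_ae hs' (h_pull.mono fun ω hω _ => hω.symm)
      _ = ∫ ω in s, g ω * L ω ∂Q := setIntegral_condExp h𝒢 hgL_int hs
      _ = ∫ ω in s, g ω ∂P := (h_transfer g s hs').symm
      _ = ∫ ω in s, f ω ∂P := setIntegral_condExp h𝒢 hf hs
      _ = ∫ ω in s, f ω * L ω ∂Q := h_transfer f s hs'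
  filter_upwards [h_main] with ω hω
  exact hω


/-- Bayes formula for conditional expectations: if `dP = L dQ` then
`E^P[f | 𝒢] · E^Q[L | 𝒢] = E^Q[f·L | 𝒢]` holds `Q`-a.e. -/
theorem bayes_formula_condexp
    {Ω : Type*} {mΩ : MeasurableSpace Ω} {Q : Measure Ω} [IsProbabilityMeasure Q]
    (L : Ω → ℝ) (hL_nonneg : ∀ ω, 0 ≤ L ω) (hL_int : Integrable L Q)
    (hL_one : ∫ ω, L ω ∂Q = 1)
    (P : Measure Ω) (hP : P = Q.withDensity (fun ω => ENNReal.ofReal (L ω)))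
    (𝒢 : MeasurableSpace Ω) (h𝒢 : 𝒢 ≤ mΩ)
    (f : Ω → ℝ) (hf : Integrable f P) :
    ∀ᵐ ω ∂Q, (P[f|𝒢]) ω * (Q[L|𝒢]) ω = (Q[fun ω => f ω * L ω|𝒢]) ω :=
  bayes_aux 𝒢 L hL_nonneg hL_int hL_one P hP h𝒢 f hf
end

section
/- Let (Ω, ℱ, Q) be a probability space, 𝒰 and 𝒪 measurable spaces, and U : Ω → 𝒰, Y : Ω → 𝒪 measurable maps that are independent under Q, with μ_U = Q ∘ U⁻¹ the distribution of U. Let L : 𝒰 × 𝒪 → [0,∞) be measurable with E^Q[L(U,Y)] = 1, and let P be the probability measure with dP = L(U,Y) dQ. Let f : 𝒰 × 𝒪 → ℝ be measurable with f(U,Y)·L(U,Y) Q-integrable. Then P-almost surely, ∫_𝒰 L(u, Y) μ_U(du) > 0 and E^P[f(U,Y) | σ(Y)] = ( ∫_𝒰 f(u,Y) L(u,Y) μ_U(du) ) / ( ∫_𝒰 L(u,Y) μ_U(du) ). -/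
open MeasureTheory ProbabilityTheory
open scoped ENNReal NNReal

private lemma key_setIntegral
    {Ω 𝒰 𝒪 : Type*} {mΩ : MeasurableSpace Ω} {m𝒰 : MeasurableSpace 𝒰}
    {m𝒪 : MeasurableSpace 𝒪} {Q : Measure Ω} [IsProbabilityMeasure Q]
    {U : Ω → 𝒰} {Y : Ω → 𝒪} (hU : Measurable U) (hY : Measurable Y)
    (hjoint : Q.map (fun ω => (U ω, Y ω)) = (Q.map U).prod (Q.map Y))
    {F : 𝒰 × 𝒪 → ℝ} (hF : Measurable F)
    (hFint : Integrable (fun ω => F (U ω, Y ω)) Q)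
    {A : Set 𝒪} (hA : MeasurableSet A) :
    ∫ ω in Y ⁻¹' A, F (U ω, Y ω) ∂Q
      = ∫ y in A, (∫ u, F (u, y) ∂(Q.map U)) ∂(Q.map Y) := by
  haveI : IsProbabilityMeasure (Q.map U) := Measure.isProbabilityMeasure_map hU.aemeasurable
  haveI : IsProbabilityMeasure (Q.map Y) := Measure.isProbabilityMeasure_map hY.aemeasurable
  have hpair : Measurable fun ω => (U ω, Y ω) := hU.prodMk hY
  have hFprod : Integrable F ((Q.map U).prod (Q.map Y)) := by
    rw [← hjoint]
    exact (integrable_map_measure hF.aestronglyMeasurable hpair.aemeasurable).mpr hFint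
  have hpre : (fun ω => (U ω, Y ω)) ⁻¹' (Set.univ ×ˢ A) = Y ⁻¹' A := by
    ext ω; simp
  rw [← hpre, ← setIntegral_map (MeasurableSet.univ.prod hA)
    hF.aestronglyMeasurable hpair.aemeasurable, hjoint,
    ← integral_indicator (MeasurableSet.univ.prod hA),
    integral_prod_symm _ (hFprod.indicator (MeasurableSet.univ.prod hA)),
    ← integral_indicator hA]
  refine integral_congr_ae (Filter.Eventually.of_forall fun y => ?_)
  by_cases hy : y ∈ A
  · rw [Set.indicator_of_mem hy]
    refine integral_congr_ae (Filter.Eventually.of_forall fun u => ?_)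
    simp [Set.indicator_of_mem, Set.mem_prod, hy]
  · rw [Set.indicator_of_notMem hy]
    have hz : ∀ u, (Set.univ ×ˢ A).indicator F (u, y) = 0 := fun u => by
      simp [Set.indicator_of_notMem, Set.mem_prod, hy]
    simp [hz]

/-- Static Kallianpur–Striebel formula: if `U ⫫ Y` under the reference measure `Q`
and `dP = L(U,Y) dQ`, then `P`-a.s. the normalizing factor `∫ L(u,Y) μ_U(du)` is
positive and
`E^P[f(U,Y) | σ(Y)] = (∫ f(u,Y) L(u,Y) μ_U(du)) / (∫ L(u,Y) μ_U(du))`. -/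
theorem kallianpur_striebel_static
    {Ω 𝒰 𝒪 : Type*} {mΩ : MeasurableSpace Ω} {m𝒰 : MeasurableSpace 𝒰}
    {m𝒪 : MeasurableSpace 𝒪} {Q : Measure Ω} [IsProbabilityMeasure Q]
    (U : Ω → 𝒰) (Y : Ω → 𝒪) (hU : Measurable U) (hY : Measurable Y)
    (hUY : IndepFun U Y Q)
    (L : 𝒰 × 𝒪 → ℝ) (hL_meas : Measurable L) (hL_nonneg : ∀ x, 0 ≤ L x)
    (hL_one : ∫ ω, L (U ω, Y ω) ∂Q = 1)
    (P : Measure Ω)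
    (hP : P = Q.withDensity (fun ω => ENNReal.ofReal (L (U ω, Y ω))))
    (f : 𝒰 × 𝒪 → ℝ) (hf_meas : Measurable f)
    (hint : Integrable (fun ω => f (U ω, Y ω) * L (U ω, Y ω)) Q) :
    ∀ᵐ ω ∂P,
      0 < ∫ u, L (u, Y ω) ∂(Q.map U) ∧
      (P[fun ω => f (U ω, Y ω)|MeasurableSpace.comap Y m𝒪]) ω
        = (∫ u, f (u, Y ω) * L (u, Y ω) ∂(Q.map U)) / ∫ u, L (u, Y ω) ∂(Q.map U) := by
  have hpair : Measurable fun ω => (U ω, Y ω) := hU.prodMk hY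
  haveI : IsProbabilityMeasure (Q.map U) := Measure.isProbabilityMeasure_map hU.aemeasurable
  haveI : IsProbabilityMeasure (Q.map Y) := Measure.isProbabilityMeasure_map hY.aemeasurable
  have hjoint : Q.map (fun ω => (U ω, Y ω)) = (Q.map U).prod (Q.map Y) :=
    (indepFun_iff_map_prod_eq_prod_map_map hU.aemeasurable hY.aemeasurable).mp hUY
  set g : 𝒪 → ℝ := fun y => ∫ u, L (u, y) ∂(Q.map U) with hg_def
  set h : 𝒪 → ℝ := fun y => ∫ u, f (u, y) * L (u, y) ∂(Q.map U) with hh_def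
  have hfL_meas : Measurable fun z : 𝒰 × 𝒪 => f z * L z := hf_meas.mul hL_meas
  have hg_meas : Measurable g :=
    (StronglyMeasurable.integral_prod_left' (μ := Q.map U)
      hL_meas.stronglyMeasurable).measurable
  have hh_meas : Measurable h :=
    (StronglyMeasurable.integral_prod_left' (μ := Q.map U)
      hfL_meas.stronglyMeasurable).measurable
  have hL_int : Integrable (fun ω => L (U ω, Y ω)) Q := integrable_of_integral_eq_one hL_one
  have hLprod : Integrable L ((Q.map U).prod (Q.map Y)) := by
    rw [← hjoint]
    exact (integrable_map_measure hL_meas.aestronglyMeasurable hpair.aemeasurable).mpr hL_int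
  have hfLprod : Integrable (fun z : 𝒰 × 𝒪 => f z * L z) ((Q.map U).prod (Q.map Y)) := by
    rw [← hjoint]
    exact (integrable_map_measure hfL_meas.aestronglyMeasurable hpair.aemeasurable).mpr hint
  have hh_int : Integrable h (Q.map Y) := hfLprod.integral_prod_right
  have haeL : ∀ᵐ y ∂(Q.map Y), Integrable (fun u => L (u, y)) (Q.map U) :=
    hLprod.prod_left_ae
  have hg_nonneg : ∀ y, 0 ≤ g y := fun y => integral_nonneg fun u => hL_nonneg _
  have h0 : ∀ᵐ y ∂(Q.map Y), g y = 0 → h y = 0 := by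
    filter_upwards [haeL] with y hyint hy0
    have hzero : (fun u => L (u, y)) =ᵐ[Q.map U] 0 :=
      (integral_eq_zero_iff_of_nonneg (fun u => hL_nonneg _) hyint).mp hy0
    have : (fun u => f (u, y) * L (u, y)) =ᵐ[Q.map U] 0 := by
      filter_upwards [hzero] with u hu
      simp only [Pi.zero_apply] at hu ⊢
      simp [hu]
    calc h y = ∫ u, (0 : ℝ) ∂(Q.map U) := integral_congr_ae this
      _ = 0 := integral_zero _ _
  have hdiv : ∀ᵐ y ∂(Q.map Y), h y / g y * g y = h y := by
    filter_upwards [h0] with y hy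
    rcases eq_or_ne (g y) 0 with h' | h'
    · simp [h', hy h']
    · exact div_mul_cancel₀ _ h'
  -- P is a probability measure
  have hQL : ∫⁻ ω, ENNReal.ofReal (L (U ω, Y ω)) ∂Q = 1 := by
    rw [← ofReal_integral_eq_lintegral_ofReal hL_int
      (Filter.Eventually.of_forall fun ω => hL_nonneg _), hL_one, ENNReal.ofReal_one]
  haveI hPprob : IsProbabilityMeasure P :=
    ⟨by rw [hP, withDensity_apply _ MeasurableSet.univ, Measure.restrict_univ, hQL]⟩
  -- change of measure for set integrals
  have hLmeasΩ : Measurable fun ω => (L (U ω, Y ω)).toNNReal :=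
    (hL_meas.comp hpair).real_toNNReal
  have hPd : P = Q.withDensity (fun ω => ((L (U ω, Y ω)).toNNReal : ℝ≥0∞)) := hP
  have hchg : ∀ (s : Set Ω), MeasurableSet s → ∀ (r : Ω → ℝ),
      ∫ ω in s, r ω ∂P = ∫ ω in s, L (U ω, Y ω) * r ω ∂Q := by
    intro s hs r
    rw [hPd, setIntegral_withDensity_eq_setIntegral_smul hLmeasΩ r hs]
    refine setIntegral_congr_fun hs fun ω _ => ?_
    simp [NNReal.smul_def, Real.coe_toNNReal _ (hL_nonneg _)]
  have hint_iff : ∀ r : Ω → ℝ, Integrable r P ↔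
      Integrable (fun ω => r ω * L (U ω, Y ω)) Q := by
    intro r
    have hmo : Measurable fun ω => ENNReal.ofReal (L (U ω, Y ω)) :=
      (hL_meas.comp hpair).ennreal_ofReal
    rw [hP, integrable_withDensity_iff hmo
      (Filter.Eventually.of_forall fun ω => ENNReal.ofReal_lt_top)]
    refine integrable_congr (Filter.Eventually.of_forall fun ω => ?_)
    simp only [ENNReal.toReal_ofReal (hL_nonneg (U ω, Y ω))]
  have hfP : Integrable (fun ω => f (U ω, Y ω)) P := (hint_iff _).mpr hint
  -- the candidate conditional expectation
  set F₀ : 𝒰 × 𝒪 → ℝ := fun z => h z.2 / g z.2 * L z with hF₀_def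
  have hF₀_meas : Measurable F₀ :=
    ((hh_meas.comp measurable_snd).div (hg_meas.comp measurable_snd)).mul hL_meas
  have hF₀prod : Integrable F₀ ((Q.map U).prod (Q.map Y)) := by
    rw [integrable_prod_iff' hF₀_meas.aestronglyMeasurable]
    constructor
    · filter_upwards [haeL] with y hy
      exact (hy.const_mul (h y / g y)).congr
        (Filter.Eventually.of_forall fun u => rfl)
    · have heq : (fun y => ∫ u, ‖F₀ (u, y)‖ ∂(Q.map U)) =ᵐ[Q.map Y] fun y => |h y| := by
        filter_upwards [hdiv] with y hy
        have hn : ∀ u, ‖F₀ (u, y)‖ = |h y / g y| * L (u, y) := fun u => by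
          rw [Real.norm_eq_abs, abs_mul, abs_of_nonneg (hL_nonneg _)]
        calc ∫ u, ‖F₀ (u, y)‖ ∂(Q.map U)
            = ∫ u, |h y / g y| * L (u, y) ∂(Q.map U) :=
              integral_congr_ae (Filter.Eventually.of_forall hn)
          _ = |h y / g y| * g y := integral_const_mul _ _
          _ = |h y| := by
              have habs := congrArg abs hy
              rw [abs_mul, abs_of_nonneg (hg_nonneg y)] at habs
              exact habs
      exact hh_int.abs.congr heq.symm
  have hF₀Q : Integrable (fun ω => F₀ (U ω, Y ω)) Q := by
    have := (integrable_map_measure hF₀_meas.aestronglyMeasurable hpair.aemeasurable).mp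
      (by rw [hjoint]; exact hF₀prod)
    exact this
  have hrP : Integrable (fun ω => h (Y ω) / g (Y ω)) P := by
    rw [hint_iff]
    exact hF₀Q
  -- set integral equality
  have hsetEq : ∀ A : Set 𝒪, MeasurableSet A →
      ∫ ω in Y ⁻¹' A, h (Y ω) / g (Y ω) ∂P = ∫ ω in Y ⁻¹' A, f (U ω, Y ω) ∂P := by
    intro A hA
    rw [hchg _ (hY hA), hchg _ (hY hA)]
    have h1 : ∫ ω in Y ⁻¹' A, L (U ω, Y ω) * (h (Y ω) / g (Y ω)) ∂Q
        = ∫ ω in Y ⁻¹' A, F₀ (U ω, Y ω) ∂Q :=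
      setIntegral_congr_fun (hY hA) fun ω _ => mul_comm _ _
    have h2 : ∫ ω in Y ⁻¹' A, L (U ω, Y ω) * f (U ω, Y ω) ∂Q
        = ∫ ω in Y ⁻¹' A, f (U ω, Y ω) * L (U ω, Y ω) ∂Q :=
      setIntegral_congr_fun (hY hA) fun ω _ => mul_comm _ _
    rw [h1, h2, key_setIntegral hU hY hjoint hF₀_meas hF₀Q hA,
      key_setIntegral hU hY hjoint hfL_meas hint hA]
    refine setIntegral_congr_ae hA ?_
    filter_upwards [hdiv] with y hy _
    have hiy : (∫ u, F₀ (u, y) ∂(Q.map U)) = h y / g y * g y := by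
      simp only [hF₀_def]
      exact integral_const_mul _ _
    rw [hiy, hy]
  -- positivity
  have hS : MeasurableSet {y | g y ≤ 0} := measurableSet_le hg_meas measurable_const
  have hPS : P (Y ⁻¹' {y | g y ≤ 0}) = 0 := by
    have h1 : ∫ ω in Y ⁻¹' {y | g y ≤ 0}, (1 : ℝ) ∂P
        = (P (Y ⁻¹' {y | g y ≤ 0})).toReal := by
      rw [setIntegral_const]; simp [Measure.real]
    have h2 : ∫ ω in Y ⁻¹' {y | g y ≤ 0}, (1 : ℝ) ∂P = 0 := by
      rw [hchg _ (hY hS)]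
      have he : ∫ ω in Y ⁻¹' {y | g y ≤ 0}, L (U ω, Y ω) * 1 ∂Q
          = ∫ ω in Y ⁻¹' {y | g y ≤ 0}, L (U ω, Y ω) ∂Q := by simp
      rw [he, key_setIntegral hU hY hjoint hL_meas hL_int hS]
      rw [setIntegral_congr_fun hS (g := fun _ => (0 : ℝ))
        (fun y hy => le_antisymm hy (hg_nonneg y))]
      simp
    have h3 : (P (Y ⁻¹' {y | g y ≤ 0})).toReal = 0 := by rw [← h1, h2]
    exact ((ENNReal.toReal_eq_zero_iff _).mp h3).resolve_right (measure_ne_top P _)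
  have hposP : ∀ᵐ ω ∂P, 0 < g (Y ω) := by
    rw [ae_iff]
    have : {ω | ¬ 0 < g (Y ω)} = Y ⁻¹' {y | g y ≤ 0} := by ext ω; simp [not_lt]
    rw [this]; exact hPS
  -- conditional expectation identification
  have hm : MeasurableSpace.comap Y m𝒪 ≤ mΩ := hY.comap_le
  haveI : SigmaFinite (P.trim hm) := by infer_instance
  have hrmeas : AEStronglyMeasurable[MeasurableSpace.comap Y m𝒪]
      (fun ω => h (Y ω) / g (Y ω)) P :=
    StronglyMeasurable.aestronglyMeasurable
      (Measurable.stronglyMeasurable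
        ((hh_meas.div hg_meas).comp (Measurable.of_comap_le le_rfl)))
  have hcond : (fun ω => h (Y ω) / g (Y ω))
      =ᵐ[P] P[fun ω => f (U ω, Y ω)|MeasurableSpace.comap Y m𝒪] := by
    refine ae_eq_condExp_of_forall_setIntegral_eq hm hfP
      (fun s _ _ => hrP.integrableOn) (fun s hs _ => ?_) hrmeas
    obtain ⟨A, hA, rfl⟩ := hs
    exact hsetEq A hA
  filter_upwards [hposP, hcond] with ω hω₁ hω₂
  exact ⟨hω₁, hω₂.symm⟩
end

section
/- Let (Ω, ℱ, Q) be a probability space, 𝒰 and 𝒪 measurable spaces, Y : Ω → 𝒪 measurable, and U₁, U₂, … : Ω → 𝒰 an i.i.d. sequence with common distribution μ such that the family (U₁, U₂, …) is independent of σ(Y) under Q. Let g : 𝒰 × 𝒪 → ℝ be measurable with g(U₁, Y) Q-integrable. Then Q-almost surely, lim_{N→∞} (1/N) ∑_{k=1}^{N} g(U_k, Y) = ∫_𝒰 g(u, Y) μ(du). -/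
open MeasureTheory ProbabilityTheory Filter Topology

/-- Conditional strong law of large numbers with a random parameter: if
`U₁, U₂, …` are i.i.d. with law `μ` and the whole family is independent of
`σ(Y)` under `Q`, then `Q`-a.s.
`(1/N) ∑_{k<N} g(U_k, Y) → ∫ g(u, Y) μ(du)`. -/
theorem conditional_slln
    {Ω 𝒰 𝒪 : Type*} {mΩ : MeasurableSpace Ω} {m𝒰 : MeasurableSpace 𝒰}
    {m𝒪 : MeasurableSpace 𝒪} {Q : Measure Ω} [IsProbabilityMeasure Q]
    (U : ℕ → Ω → 𝒰) (Y : Ω → 𝒪) (hU : ∀ k, Measurable (U k)) (hY : Measurable Y)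
    (μ : Measure 𝒰) (hdist : ∀ k, Q.map (U k) = μ)
    (hiid : iIndepFun (m := fun _ => m𝒰) U Q)
    (hindep : Indep (⨆ k, MeasurableSpace.comap (U k) m𝒰)
      (MeasurableSpace.comap Y m𝒪) Q)
    (g : 𝒰 × 𝒪 → ℝ) (hg : Measurable g)
    (hint : Integrable (fun ω => g (U 0 ω, Y ω)) Q) :
    ∀ᵐ ω ∂Q,
      Tendsto (fun N : ℕ => (N : ℝ)⁻¹ * ∑ k ∈ Finset.range N, g (U k ω, Y ω))
        atTop (𝓝 (∫ u, g (u, Y ω) ∂μ)) := by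
  haveI hμprob : IsProbabilityMeasure μ :=
    (hdist 0) ▸ Measure.isProbabilityMeasure_map (hU 0).aemeasurable
  set ν : Measure 𝒪 := Q.map Y with hν
  haveI : IsProbabilityMeasure ν := Measure.isProbabilityMeasure_map hY.aemeasurable
  set UF : Ω → (ℕ → 𝒰) := fun ω k => U k ω with hUF
  have hUFm : Measurable UF := measurable_pi_lambda _ hU
  set π : Measure (ℕ → 𝒰) := Q.map UF with hπ
  haveI : IsProbabilityMeasure π := Measure.isProbabilityMeasure_map hUFm.aemeasurable
  -- law of each coordinate
  have hev : ∀ k, π.map (fun f : ℕ → 𝒰 => f k) = μ := by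
    intro k
    rw [hπ, Measure.map_map (measurable_pi_apply k) hUFm]
    exact hdist k
  -- the σ-algebra generated by UF is the sup of those of the U k
  have hcomap : (MeasurableSpace.pi).comap UF = ⨆ k, m𝒰.comap (U k) := by
    rw [MeasurableSpace.pi, MeasurableSpace.comap_iSup]
    simp_rw [MeasurableSpace.comap_comp]
    rfl
  have hIF : IndepFun UF Y Q := by
    rw [IndepFun_iff_Indep, hcomap]; exact hindep
  have hmapPair : Q.map (fun ω => (UF ω, Y ω)) = π.prod ν :=
    (indepFun_iff_map_prod_eq_prod_map_map hUFm.aemeasurable hY.aemeasurable).mp hIF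
  -- (U 0, Y) has law μ ⊗ ν
  have hIF0 : IndepFun (U 0) Y Q := by
    rw [IndepFun_iff_Indep]
    exact indep_of_indep_of_le_left hindep (le_iSup (fun k => m𝒰.comap (U k)) 0)
  have hmap0 : Q.map (fun ω => (U 0 ω, Y ω)) = μ.prod ν := by
    rw [(indepFun_iff_map_prod_eq_prod_map_map (hU 0).aemeasurable hY.aemeasurable).mp hIF0,
      hdist 0]
  have hgint : Integrable g (μ.prod ν) := by
    rw [← hmap0,
      integrable_map_measure hg.aestronglyMeasurable ((hU 0).prodMk hY).aemeasurable]
    exact hint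
  have hintae : ∀ᵐ y ∂ν, Integrable (fun u => g (u, y)) μ := hgint.prod_left_ae
  -- slice-wise strong law of large numbers
  have hslice : ∀ᵐ y ∂ν, ∀ᵐ f ∂π,
      Tendsto (fun N : ℕ => (N : ℝ)⁻¹ * ∑ k ∈ Finset.range N, g (f k, y)) atTop
        (𝓝 (∫ u, g (u, y) ∂μ)) := by
    filter_upwards [hintae] with y hy
    have hgym : Measurable (fun u => g (u, y)) := hg.comp (measurable_prodMk_right)
    have hX0int : Integrable (fun f : ℕ → 𝒰 => g (f 0, y)) π := by
      have h := integrable_map_measure (μ := π) (f := fun f : ℕ → 𝒰 => f 0)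
        hgym.aestronglyMeasurable (measurable_pi_apply 0).aemeasurable
      rw [hev 0] at h
      exact h.mp hy
    have hpind : Pairwise (Function.onFun (IndepFun · · π) fun k (f : ℕ → 𝒰) => g (f k, y)) := by
      intro i j hij
      have h1 : IndepFun (U i) (U j) Q := hiid.indepFun hij
      have h2 : Q.map (fun ω => (U i ω, U j ω)) = μ.prod μ := by
        rw [(indepFun_iff_map_prod_eq_prod_map_map (hU i).aemeasurable
          (hU j).aemeasurable).mp h1, hdist i, hdist j]
      have h3 : IndepFun (fun f : ℕ → 𝒰 => f i) (fun f => f j) π := by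
        rw [indepFun_iff_map_prod_eq_prod_map_map (measurable_pi_apply i).aemeasurable
          (measurable_pi_apply j).aemeasurable, hev i, hev j, hπ,
          Measure.map_map (by fun_prop) hUFm]
        exact h2
      exact h3.comp hgym hgym
    have hident : ∀ k, IdentDistrib (fun f : ℕ → 𝒰 => g (f k, y))
        (fun f => g (f 0, y)) π π := by
      intro k
      have hd : IdentDistrib (fun f : ℕ → 𝒰 => f k) (fun f => f 0) π π :=
        ⟨(measurable_pi_apply k).aemeasurable, (measurable_pi_apply 0).aemeasurable,
          by rw [hev k, hev 0]⟩
      exact hd.comp hgym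
    have hslln := strong_law_ae_real _ hX0int hpind hident
    have hEX : (∫ f, g (f 0, y) ∂π) = ∫ u, g (u, y) ∂μ := by
      rw [← hev 0, integral_map (measurable_pi_apply 0).aemeasurable
        hgym.aestronglyMeasurable]
    filter_upwards [hslln] with f hf
    rw [← hEX]
    simpa only [div_eq_inv_mul] using hf
  -- the "good" set is measurable
  set S : Set ((ℕ → 𝒰) × 𝒪) := {p | Tendsto
      (fun N : ℕ => (N : ℝ)⁻¹ * ∑ k ∈ Finset.range N, g (p.1 k, p.2)) atTop
      (𝓝 (∫ u, g (u, p.2) ∂μ))} with hSdef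
  have hSmeas : MeasurableSet S := by
    apply measurableSet_tendsto_fun
    · intro n
      exact measurable_const.mul <| Finset.measurable_sum _ fun k _ =>
        hg.comp (((measurable_pi_apply k).comp measurable_fst).prodMk measurable_snd)
    · exact (hg.stronglyMeasurable.integral_prod_left').measurable.comp measurable_snd
  -- a.e. statement on the product space
  have hprodae : ∀ᵐ p ∂(π.prod ν), p ∈ S := by
    have hswap : π.prod ν = (ν.prod π).map Prod.swap := (Measure.prod_swap).symm
    rw [ae_iff]
    show (π.prod ν) Sᶜ = 0
    rw [hswap, Measure.map_apply measurable_swap hSmeas.compl,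
      Measure.measure_prod_null (measurable_swap hSmeas.compl)]
    filter_upwards [hslice] with y hy
    have heq : Prod.mk y ⁻¹' (Prod.swap ⁻¹' Sᶜ) = {f : ℕ → 𝒰 | (f, y) ∉ S} := rfl
    rw [heq, Pi.zero_apply]
    rw [ae_iff] at hy
    exact hy
  -- transfer back to Ω
  have hfinal : ∀ᵐ ω ∂Q, (UF ω, Y ω) ∈ S := by
    have hA : AEMeasurable (fun ω => (UF ω, Y ω)) Q := (hUFm.prodMk hY).aemeasurable
    rw [← hmapPair] at hprodae
    exact (ae_map_iff hA hSmeas).mp hprodae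
  filter_upwards [hfinal] with ω hω
  exact hω
end

section
/- Let (Ω, ℱ, Q) be a probability space, 𝒰 and 𝒪 measurable spaces, Y : Ω → 𝒪 measurable, and U₁, U₂, … : Ω → 𝒰 an i.i.d. sequence with common distribution μ such that the family (U₁, U₂, …) is independent of σ(Y) under Q. Let L : 𝒰 × 𝒪 → [0,∞) be measurable with E^Q[L(U₁,Y)] = 1 and let P be the probability measure with dP = L(U₁,Y) dQ. Let f : 𝒰 × 𝒪 → ℝ be bounded measurable. Then P-almost surely, lim_{N→∞} ( ∑_{k=1}^{N} f(U_k,Y) L(U_k,Y) ) / ( ∑_{k=1}^{N} L(U_k,Y) ) exists and equals E^P[f(U₁,Y) | σ(Y)]. -/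
open MeasureTheory ProbabilityTheory Filter Topology

lemma slln_aux {𝒰 : Type*} [m𝒰 : MeasurableSpace 𝒰] {π : Measure (ℕ → 𝒰)}
    (μ : Measure 𝒰)
    (heval : ∀ k, π.map (fun v => v k) = μ)
    (hpair : Pairwise fun i j => IndepFun (fun v : ℕ → 𝒰 => v i) (fun v => v j) π)
    (G : 𝒰 → ℝ) (hG : Measurable G) (hGint : Integrable G μ) :
    ∀ᵐ v ∂π, Tendsto (fun n : ℕ => (n : ℝ)⁻¹ • ∑ k ∈ Finset.range n, G (v k)) atTop
      (𝓝 (∫ u, G u ∂μ)) := by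
  have hint : Integrable (fun v : ℕ → 𝒰 => G (v 0)) π := by
    have h := (integrable_map_measure (f := fun v : ℕ → 𝒰 => v 0) (μ := π)
      hG.aestronglyMeasurable (measurable_pi_apply 0).aemeasurable)
    rw [heval 0] at h
    exact h.mp hGint
  have hindep : Pairwise (Function.onFun (IndepFun · · π) fun k (v : ℕ → 𝒰) => G (v k)) := by
    intro i j hij
    exact (hpair hij).comp hG hG
  have hident : ∀ i, IdentDistrib (fun v : ℕ → 𝒰 => G (v i)) (fun v => G (v 0)) π π := by
    intro i
    have h0 : IdentDistrib (fun v : ℕ → 𝒰 => v i) (fun v => v 0) π π :=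
      ⟨(measurable_pi_apply i).aemeasurable, (measurable_pi_apply 0).aemeasurable, by
        rw [heval i, heval 0]⟩
    exact h0.comp hG
  have h := strong_law_ae (μ := π) (fun k (v : ℕ → 𝒰) => G (v k)) hint hindep hident
  have heq : (π[fun v : ℕ → 𝒰 => G (v 0)]) = ∫ u, G u ∂μ := by
    rw [← heval 0, integral_map (measurable_pi_apply 0).aemeasurable hG.aestronglyMeasurable]
  rw [heq] at h
  exact h

/-- Weighted particle (Monte Carlo) representation of a conditional expectation:
if `U₁, U₂, …` are i.i.d. with law `μ`, independent of `σ(Y)` under the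
reference measure `Q`, and `dP = L(U₁,Y) dQ`, then for bounded measurable `f`,
`P`-a.s.
`(∑_{k<N} f(U_k,Y) L(U_k,Y)) / (∑_{k<N} L(U_k,Y)) → E^P[f(U₁,Y) | σ(Y)]`. -/
theorem particle_representation_condexp
    {Ω 𝒰 𝒪 : Type*} {mΩ : MeasurableSpace Ω} {m𝒰 : MeasurableSpace 𝒰}
    {m𝒪 : MeasurableSpace 𝒪} {Q : Measure Ω} [IsProbabilityMeasure Q]
    (U : ℕ → Ω → 𝒰) (Y : Ω → 𝒪) (hU : ∀ k, Measurable (U k)) (hY : Measurable Y)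
    (μ : Measure 𝒰) (hdist : ∀ k, Q.map (U k) = μ)
    (hiid : iIndepFun (m := fun _ => m𝒰) U Q)
    (hindep : Indep (⨆ k, MeasurableSpace.comap (U k) m𝒰)
      (MeasurableSpace.comap Y m𝒪) Q)
    (L : 𝒰 × 𝒪 → ℝ) (hL_meas : Measurable L) (hL_nonneg : ∀ x, 0 ≤ L x)
    (hL_one : ∫ ω, L (U 0 ω, Y ω) ∂Q = 1)
    (P : Measure Ω)
    (hP : P = Q.withDensity (fun ω => ENNReal.ofReal (L (U 0 ω, Y ω))))
    (f : 𝒰 × 𝒪 → ℝ) (hf_meas : Measurable f) (hf_bdd : ∃ C : ℝ, ∀ x, |f x| ≤ C) :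
    ∀ᵐ ω ∂P,
      Tendsto
        (fun N : ℕ =>
          (∑ k ∈ Finset.range N, f (U k ω, Y ω) * L (U k ω, Y ω)) /
            ∑ k ∈ Finset.range N, L (U k ω, Y ω))
        atTop
        (𝓝 ((P[fun ω => f (U 0 ω, Y ω)|MeasurableSpace.comap Y m𝒪]) ω)) := by
  classical
  obtain ⟨C, hC⟩ := hf_bdd
  -- notation
  set ν : Measure 𝒪 := Q.map Y with hν
  set V : Ω → ℕ → 𝒰 := fun ω k => U k ω with hVdef
  have hVmeas : Measurable V := measurable_pi_lambda _ hU
  set π : Measure (ℕ → 𝒰) := Q.map V with hπ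
  haveI : IsProbabilityMeasure ν := Measure.isProbabilityMeasure_map hY.aemeasurable
  haveI : IsProbabilityMeasure π := Measure.isProbabilityMeasure_map hVmeas.aemeasurable
  haveI : IsProbabilityMeasure μ := by
    rw [← hdist 0]; exact Measure.isProbabilityMeasure_map (hU 0).aemeasurable
  set m₀ : 𝒪 → ℝ := fun y => ∫ u, L (u, y) ∂μ with hm₀def
  set m₁ : 𝒪 → ℝ := fun y => ∫ u, f (u, y) * L (u, y) ∂μ with hm₁def
  set g : 𝒪 → ℝ := fun y => m₁ y / m₀ y with hgdef
  have hΩ : Nonempty Ω := by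
    by_contra h
    rw [not_nonempty_iff] at h
    have h1 : Q Set.univ = 1 := measure_univ
    rw [Set.univ_eq_empty_iff.mpr h, measure_empty] at h1
    exact zero_ne_one h1
  have hC0 : 0 ≤ C :=
    le_trans (abs_nonneg _) (hC (U 0 (Classical.arbitrary Ω), Y (Classical.arbitrary Ω)))
  -- measurability of m₀, m₁, g
  have hm₀meas : Measurable m₀ := by
    have h : StronglyMeasurable fun p : 𝒪 × 𝒰 => L (p.2, p.1) :=
      (hL_meas.comp measurable_swap).stronglyMeasurable
    exact h.integral_prod_right'.measurable
  have hm₁meas : Measurable m₁ := by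
    have h : StronglyMeasurable fun p : 𝒪 × 𝒰 => f (p.2, p.1) * L (p.2, p.1) :=
      ((hf_meas.comp measurable_swap).mul (hL_meas.comp measurable_swap)).stronglyMeasurable
    exact h.integral_prod_right'.measurable
  have hgmeas : Measurable g := hm₁meas.div hm₀meas
  -- laws
  have hT0law : Q.map (fun ω => (U 0 ω, Y ω)) = μ.prod ν := by
    have hind : IndepFun (U 0) Y Q := indep_of_indep_of_le_left hindep (le_iSup (fun k => MeasurableSpace.comap (U k) m𝒰) 0)
    rw [(indepFun_iff_map_prod_eq_prod_map_map (hU 0).aemeasurable hY.aemeasurable).mp hind,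
      hdist 0]
  have hVYlaw : Q.map (fun ω => (Y ω, V ω)) = ν.prod π := by
    have hcomap : MeasurableSpace.comap V MeasurableSpace.pi
        = ⨆ k, MeasurableSpace.comap (U k) m𝒰 := by
      have hpi : (MeasurableSpace.pi : MeasurableSpace (ℕ → 𝒰))
          = ⨆ k, m𝒰.comap fun v : ℕ → 𝒰 => v k := rfl
      rw [hpi, MeasurableSpace.comap_iSup]
      exact iSup_congr fun k => MeasurableSpace.comap_comp
    have hindYV : IndepFun Y V Q := by
      show Indep (MeasurableSpace.comap Y m𝒪) (MeasurableSpace.comap V MeasurableSpace.pi) Q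
      rw [hcomap]
      exact hindep.symm
    exact (indepFun_iff_map_prod_eq_prod_map_map hY.aemeasurable hVmeas.aemeasurable).mp hindYV
  -- integrability of the density
  set ℓ : Ω → ℝ := fun ω => L (U 0 ω, Y ω) with hℓdef
  have hℓmeas : Measurable ℓ := hL_meas.comp ((hU 0).prodMk hY)
  have hℓint : Integrable ℓ Q := by
    by_contra h
    rw [integral_undef h] at hL_one
    exact one_ne_zero hL_one.symm
  have hLint : Integrable L (μ.prod ν) := by
    rw [← hT0law]
    exact (integrable_map_measure hL_meas.aestronglyMeasurable
      ((hU 0).prodMk hY).aemeasurable).mpr hℓint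
  have hae_int : ∀ᵐ y ∂ν, Integrable (fun u => L (u, y)) μ := hLint.prod_left_ae
  -- P is a probability measure, P ≪ Q
  haveI hPprob : IsProbabilityMeasure P := by
    constructor
    rw [hP, withDensity_apply _ MeasurableSet.univ, Measure.restrict_univ,
      ← ofReal_integral_eq_lintegral_ofReal hℓint (Eventually.of_forall fun ω => hL_nonneg _),
      hL_one, ENNReal.ofReal_one]
  have hPQ : P ≪ Q := by rw [hP]; exact withDensity_absolutelyContinuous Q _
  -- evaluation laws and pairwise independence under π
  have hevallaw : ∀ k, π.map (fun v : ℕ → 𝒰 => v k) = μ := by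
    intro k
    rw [hπ, Measure.map_map (measurable_pi_apply k) hVmeas]
    exact hdist k
  have hpair : Pairwise fun i j => IndepFun (fun v : ℕ → 𝒰 => v i) (fun v => v j) π := by
    intro i j hij
    rw [indepFun_iff_map_prod_eq_prod_map_map (measurable_pi_apply i).aemeasurable
      (measurable_pi_apply j).aemeasurable, hevallaw i, hevallaw j]
    have hmm : π.map (fun v : ℕ → 𝒰 => (v i, v j)) = Q.map (fun ω => (U i ω, U j ω)) := by
      rw [hπ, Measure.map_map ((measurable_pi_apply i).prodMk (measurable_pi_apply j)) hVmeas]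
      rfl
    rw [hmm, (indepFun_iff_map_prod_eq_prod_map_map (hU i).aemeasurable
      (hU j).aemeasurable).mp (hiid.indepFun hij), hdist i, hdist j]
  have hm₀nonneg : ∀ y, 0 ≤ m₀ y := fun y => integral_nonneg fun u => hL_nonneg _
  have hfmeas_y : ∀ y : 𝒪, Measurable fun u => f (u, y) :=
    fun y => hf_meas.comp (measurable_id.prodMk measurable_const)
  have hLmeas_y : ∀ y : 𝒪, Measurable fun u => L (u, y) :=
    fun y => hL_meas.comp (measurable_id.prodMk measurable_const)
  have hfLint : ∀ y : 𝒪, Integrable (fun u => L (u, y)) μ →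
      Integrable (fun u => f (u, y) * L (u, y)) μ := by
    intro y hyint
    refine (hyint.const_mul C).mono' ((hfmeas_y y).mul (hLmeas_y y)).aestronglyMeasurable ?_
    refine Eventually.of_forall fun u => ?_
    rw [Real.norm_eq_abs, abs_mul, abs_of_nonneg (hL_nonneg _)]
    exact mul_le_mul_of_nonneg_right (hC _) (hL_nonneg _)
  -- per-y convergence from the strong law
  have hy_conv : ∀ y : 𝒪, Integrable (fun u => L (u, y)) μ → 0 < m₀ y →
      ∀ᵐ v ∂π, Tendsto (fun N : ℕ =>
          (∑ k ∈ Finset.range N, f (v k, y) * L (v k, y)) /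
            ∑ k ∈ Finset.range N, L (v k, y)) atTop (𝓝 (g y)) := by
    intro y hyint hy0
    have h1 := slln_aux μ hevallaw hpair _ ((hfmeas_y y).mul (hLmeas_y y)) (hfLint y hyint)
    have h2 := slln_aux μ hevallaw hpair _ (hLmeas_y y) hyint
    filter_upwards [h1, h2] with v hv1 hv2
    have hdiv := hv1.div hv2 (ne_of_gt hy0)
    refine Tendsto.congr' ?_ hdiv
    filter_upwards [eventually_ge_atTop 1] with n hn
    have hne : ((n : ℝ))⁻¹ ≠ 0 := inv_ne_zero (Nat.cast_ne_zero.mpr (by omega))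
    simp only [smul_eq_mul, Pi.div_apply]
    rw [mul_div_mul_left _ _ hne]
    rfl
  -- the good set of observations and the convergence set
  set Sgood : Set 𝒪 := {y | Integrable (fun u => L (u, y)) μ ∧ 0 < m₀ y} with hSgooddef
  have hSgood_meas : MeasurableSet Sgood := by
    have h1 : MeasurableSet {y : 𝒪 | Integrable (fun u => L (u, y)) μ} := by
      have hSM : StronglyMeasurable (Function.uncurry fun (y : 𝒪) (u : 𝒰) => L (u, y)) :=
        (hL_meas.comp measurable_swap).stronglyMeasurable
      exact measurableSet_integrable hSM
    have h2 : MeasurableSet {y : 𝒪 | 0 < m₀ y} := measurableSet_lt measurable_const hm₀meas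
    exact h1.inter h2
  set T : Set (𝒪 × (ℕ → 𝒰)) := {p | Tendsto (fun N : ℕ =>
      (∑ k ∈ Finset.range N, f (p.2 k, p.1) * L (p.2 k, p.1)) /
        ∑ k ∈ Finset.range N, L (p.2 k, p.1)) atTop (𝓝 (g p.1))} with hTdef
  have hTmeas : MeasurableSet T := by
    have hterm : ∀ k : ℕ, Measurable fun p : 𝒪 × (ℕ → 𝒰) => (p.2 k, p.1) :=
      fun k => ((measurable_pi_apply k).comp measurable_snd).prodMk measurable_fst
    refine measurableSet_tendsto_fun (fun N => ?_) (hgmeas.comp measurable_fst)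
    refine Measurable.div ?_ ?_
    · exact Finset.measurable_sum _ fun k _ =>
        (hf_meas.comp (hterm k)).mul (hL_meas.comp (hterm k))
    · exact Finset.measurable_sum _ fun k _ => hL_meas.comp (hterm k)
  have hfull : ∀ᵐ p ∂(ν.prod π), p ∈ (Prod.fst ⁻¹' Sgood)ᶜ ∪ T := by
    have hA : MeasurableSet ((Prod.fst ⁻¹' Sgood) ∩ Tᶜ) :=
      (measurable_fst hSgood_meas).inter hTmeas.compl
    have h0 : (ν.prod π) ((Prod.fst ⁻¹' Sgood) ∩ Tᶜ) = 0 := by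
      rw [Measure.measure_prod_null hA]
      refine Eventually.of_forall fun y => ?_
      by_cases hy : y ∈ Sgood
      · simp only [Pi.zero_apply]
        have hseteq : (Prod.mk y ⁻¹' ((Prod.fst ⁻¹' Sgood) ∩ Tᶜ)) =
            {v : ℕ → 𝒰 | ¬ Tendsto (fun N : ℕ =>
              (∑ k ∈ Finset.range N, f (v k, y) * L (v k, y)) /
                ∑ k ∈ Finset.range N, L (v k, y)) atTop (𝓝 (g y))} := by
          ext v
          simp only [Set.mem_preimage, Set.mem_inter_iff, Set.mem_compl_iff, Set.mem_setOf_eq,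
            hTdef, hy, true_and]
        rw [hseteq]
        have hconv := hy_conv y hy.1 hy.2
        rw [ae_iff] at hconv
        exact hconv
      · simp only [Pi.zero_apply]
        have hseteq : (Prod.mk y ⁻¹' ((Prod.fst ⁻¹' Sgood) ∩ Tᶜ)) = ∅ := by
          ext v
          simp [hy]
        rw [hseteq, measure_empty]
    rw [ae_iff]
    have hseteq : {p : 𝒪 × (ℕ → 𝒰) | ¬ p ∈ (Prod.fst ⁻¹' Sgood)ᶜ ∪ T}
        = (Prod.fst ⁻¹' Sgood) ∩ Tᶜ := by
      ext p
      simp only [Set.mem_setOf_eq, Set.mem_union, Set.mem_compl_iff, Set.mem_inter_iff, not_or,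
        not_not]
    rw [hseteq]
    exact h0
  have hQconv : ∀ᵐ ω ∂Q, (Y ω, V ω) ∈ (Prod.fst ⁻¹' Sgood)ᶜ ∪ T := by
    apply ae_of_ae_map (hY.prodMk hVmeas).aemeasurable
    rw [hVYlaw]
    exact hfull
  -- P-a.s. the observation is good
  have hQint : ∀ᵐ ω ∂Q, Integrable (fun u => L (u, Y ω)) μ :=
    ae_of_ae_map hY.aemeasurable hae_int
  have hPpos : ∀ᵐ ω ∂P, 0 < m₀ (Y ω) := by
    set B : Set 𝒪 := {y | m₀ y ≤ 0} with hBdef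
    have hB : MeasurableSet B := measurableSet_le hm₀meas measurable_const
    have hpre : MeasurableSet (Y ⁻¹' B) := hY hB
    rw [ae_iff]
    have hset : {ω | ¬ 0 < m₀ (Y ω)} = Y ⁻¹' B := by
      ext ω
      simp [not_lt, hBdef]
    rw [hset, hP, withDensity_apply _ hpre]
    have hmap : ∫⁻ p in Prod.snd ⁻¹' B, ENNReal.ofReal (L p) ∂(μ.prod ν)
        = ∫⁻ ω in Y ⁻¹' B, ENNReal.ofReal (ℓ ω) ∂Q := by
      rw [← hT0law]
      exact setLIntegral_map (measurable_snd hB)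
        (ENNReal.measurable_ofReal.comp hL_meas) ((hU 0).prodMk hY)
    rw [← hmap]
    have hsndB : (Prod.snd ⁻¹' B : Set (𝒰 × 𝒪)) = Set.univ ×ˢ B := by
      ext p
      simp
    have hrestr : (μ.prod ν).restrict (Set.univ ×ˢ B) = μ.prod (ν.restrict B) := by
      rw [← Measure.prod_restrict, Measure.restrict_univ]
    rw [hsndB, hrestr]
    rw [lintegral_prod_symm' (fun p : 𝒰 × 𝒪 => ENNReal.ofReal (L p))
      (ENNReal.measurable_ofReal.comp hL_meas)]
    have hinner : ∀ᵐ y ∂(ν.restrict B), ∫⁻ u, ENNReal.ofReal (L (u, y)) ∂μ = 0 := by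
      filter_upwards [ae_restrict_of_ae hae_int, ae_restrict_mem hB] with y hyint hyB
      rw [← ofReal_integral_eq_lintegral_ofReal hyint
        (Eventually.of_forall fun u => hL_nonneg _)]
      exact ENNReal.ofReal_eq_zero.mpr hyB
    rw [lintegral_congr_ae hinner, lintegral_zero]
  have hclaim1 : ∀ᵐ ω ∂P, Tendsto (fun N : ℕ =>
      (∑ k ∈ Finset.range N, f (U k ω, Y ω) * L (U k ω, Y ω)) /
        ∑ k ∈ Finset.range N, L (U k ω, Y ω)) atTop (𝓝 (g (Y ω))) := by
    filter_upwards [hPQ.ae_le hQconv, hPQ.ae_le hQint, hPpos] with ω h1 h2 h3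
    rcases h1 with h1 | h1
    · exact absurd ⟨h2, h3⟩ h1
    · exact h1
  -- identification of the limit with the conditional expectation
  set F : Ω → ℝ := fun ω => f (U 0 ω, Y ω) with hFdef
  have hFmeas : Measurable F := hf_meas.comp ((hU 0).prodMk hY)
  have hFint : Integrable F P := by
    refine (integrable_const C).mono' hFmeas.aestronglyMeasurable ?_
    exact Eventually.of_forall fun ω => by rw [Real.norm_eq_abs]; exact hC _
  have hm : MeasurableSpace.comap Y m𝒪 ≤ mΩ := hY.comap_le
  have hgbound : ∀ y : 𝒪, Integrable (fun u => L (u, y)) μ → |g y| ≤ C := by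
    intro y hyint
    rcases eq_or_lt_of_le (hm₀nonneg y) with h0 | h0
    · show |m₁ y / m₀ y| ≤ C
      rw [← h0, div_zero, abs_zero]
      exact hC0
    · have habs : |m₁ y| ≤ C * m₀ y := by
        have h1 : |m₁ y| ≤ ∫ u, |f (u, y) * L (u, y)| ∂μ := by
          simpa only [Real.norm_eq_abs] using
            norm_integral_le_integral_norm (μ := μ) (f := fun u => f (u, y) * L (u, y))
        have h2 : ∫ u, |f (u, y) * L (u, y)| ∂μ ≤ ∫ u, C * L (u, y) ∂μ := by
          refine integral_mono (hfLint y hyint).abs (hyint.const_mul C) fun u => ?_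
          rw [abs_mul, abs_of_nonneg (hL_nonneg _)]
          exact mul_le_mul_of_nonneg_right (hC _) (hL_nonneg _)
        have h3 : ∫ u, C * L (u, y) ∂μ = C * m₀ y := integral_const_mul _ _
        linarith
      show |m₁ y / m₀ y| ≤ C
      rw [abs_div, abs_of_pos h0, div_le_iff₀ h0]
      exact habs
  have hgYboundae : ∀ᵐ y ∂ν, |g y| ≤ C := hae_int.mono fun y hy => hgbound y hy
  have hgYboundP : ∀ᵐ ω ∂P, |g (Y ω)| ≤ C :=
    hPQ.ae_le (ae_of_ae_map hY.aemeasurable hgYboundae)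
  have hgYint : Integrable (fun ω => g (Y ω)) P := by
    refine (integrable_const C).mono' (hgmeas.comp hY).aestronglyMeasurable ?_
    filter_upwards [hgYboundP] with ω h using by rwa [Real.norm_eq_abs]
  have hTmeas0 : Measurable fun ω => (U 0 ω, Y ω) := (hU 0).prodMk hY
  -- the key change-of-variables identity
  have key : ∀ (B : Set 𝒪), MeasurableSet B → ∀ (ψ : 𝒰 × 𝒪 → ℝ), Measurable ψ →
      Integrable (fun p : 𝒰 × 𝒪 => L p * ψ p) (μ.prod ν) →
      ∫ ω in Y ⁻¹' B, ψ (U 0 ω, Y ω) ∂P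
        = ∫ y in B, ∫ u, L (u, y) * ψ (u, y) ∂μ ∂ν := by
    intro B hB ψ hψ hint
    have hpre : MeasurableSet (Y ⁻¹' B) := hY hB
    have hstep1 : ∫ ω in Y ⁻¹' B, ψ (U 0 ω, Y ω) ∂P
        = ∫ ω in Y ⁻¹' B, ℓ ω * ψ (U 0 ω, Y ω) ∂Q := by
      rw [hP]
      have hd : (fun ω => ENNReal.ofReal (ℓ ω))
          = fun ω => ((Real.toNNReal (ℓ ω) : NNReal) : ENNReal) := rfl
      rw [hd, setIntegral_withDensity_eq_setIntegral_smul hℓmeas.real_toNNReal _ hpre]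
      refine setIntegral_congr_fun hpre fun ω _ => ?_
      rw [NNReal.smul_def, Real.coe_toNNReal _ (hL_nonneg _), smul_eq_mul]
    have hstep2 : ∫ p in Prod.snd ⁻¹' B, L p * ψ p ∂(μ.prod ν)
        = ∫ ω in Y ⁻¹' B, ℓ ω * ψ (U 0 ω, Y ω) ∂Q := by
      rw [← hT0law]
      exact setIntegral_map (measurable_snd hB) (hL_meas.mul hψ).aestronglyMeasurable
        hTmeas0.aemeasurable
    have hstep3 : ∫ p in Prod.snd ⁻¹' B, L p * ψ p ∂(μ.prod ν)
        = ∫ y in B, ∫ u, L (u, y) * ψ (u, y) ∂μ ∂ν := by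
      have hsndB : (Prod.snd ⁻¹' B : Set (𝒰 × 𝒪)) = Set.univ ×ˢ B := by
        ext p
        simp
      have hrestr : (μ.prod ν).restrict (Set.univ ×ˢ B) = μ.prod (ν.restrict B) := by
        rw [← Measure.prod_restrict, Measure.restrict_univ]
      rw [hsndB]
      show ∫ p, L p * ψ p ∂((μ.prod ν).restrict (Set.univ ×ˢ B)) = _
      rw [hrestr, integral_prod_symm _ (by rw [← hrestr]; exact hint.restrict)]
    rw [hstep1, ← hstep2, hstep3]
  -- integrability of the two integrands on the product space
  have hint_f : Integrable (fun p : 𝒰 × 𝒪 => L p * f p) (μ.prod ν) := by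
    refine (hLint.const_mul C).mono' (hL_meas.mul hf_meas).aestronglyMeasurable ?_
    refine Eventually.of_forall fun p => ?_
    rw [Real.norm_eq_abs, abs_mul]
    calc |L p| * |f p| = L p * |f p| := by rw [abs_of_nonneg (hL_nonneg p)]
      _ ≤ L p * C := mul_le_mul_of_nonneg_left (hC p) (hL_nonneg p)
      _ = C * L p := mul_comm _ _
  have hsnd_ae : ∀ᵐ p : 𝒰 × 𝒪 ∂(μ.prod ν), |g p.2| ≤ C := by
    refine ae_of_ae_map (p := fun y : 𝒪 => |g y| ≤ C)
      (measurable_snd.aemeasurable : AEMeasurable (Prod.snd : 𝒰 × 𝒪 → 𝒪) (μ.prod ν)) ?_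
    rw [Measure.map_snd_prod, measure_univ, one_smul]
    exact hgYboundae
  have hint_g : Integrable (fun p : 𝒰 × 𝒪 => L p * g p.2) (μ.prod ν) := by
    refine (hLint.const_mul C).mono'
      (hL_meas.mul (hgmeas.comp measurable_snd)).aestronglyMeasurable ?_
    filter_upwards [hsnd_ae] with p hp
    rw [Real.norm_eq_abs, abs_mul]
    calc |L p| * |g p.2| = L p * |g p.2| := by rw [abs_of_nonneg (hL_nonneg p)]
      _ ≤ L p * C := mul_le_mul_of_nonneg_left hp (hL_nonneg p)
      _ = C * L p := mul_comm _ _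
  -- set-integral identity
  have heq : ∀ s : Set Ω, MeasurableSet[MeasurableSpace.comap Y m𝒪] s → P s < ⊤ →
      ∫ ω in s, g (Y ω) ∂P = ∫ ω in s, F ω ∂P := by
    rintro s ⟨B, hB, rfl⟩ -
    rw [key B hB (fun p => g p.2) (hgmeas.comp measurable_snd) hint_g,
      key B hB f hf_meas hint_f]
    refine setIntegral_congr_ae hB ?_
    filter_upwards [hae_int] with y hy hyB
    by_cases h0 : m₀ y = 0
    · have hL0 : (fun u => L (u, y)) =ᵐ[μ] 0 :=
        (integral_eq_zero_iff_of_nonneg (fun u => hL_nonneg _) hy).mp h0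
      have h1 : ∫ u, L (u, y) * g y ∂μ = 0 := by
        rw [integral_congr_ae (hL0.mono fun u hu => by
          show L (u, y) * g y = 0
          have hu' : L (u, y) = 0 := hu
          rw [hu', zero_mul])]
        exact integral_zero _ _
      have h2 : ∫ u, L (u, y) * f (u, y) ∂μ = 0 := by
        rw [integral_congr_ae (hL0.mono fun u hu => by
          show L (u, y) * f (u, y) = 0
          have hu' : L (u, y) = 0 := hu
          rw [hu', zero_mul])]
        exact integral_zero _ _
      rw [h1, h2]
    · have hLf : ∫ u, L (u, y) * f (u, y) ∂μ = m₁ y := by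
        show _ = ∫ u, f (u, y) * L (u, y) ∂μ
        exact integral_congr_ae (Eventually.of_forall fun u => mul_comm _ _)
      rw [integral_mul_const, hLf]
      show m₀ y * (m₁ y / m₀ y) = m₁ y
      field_simp
  have hYm : Measurable[MeasurableSpace.comap Y m𝒪] Y := fun s hs => ⟨s, hs, rfl⟩
  have hAESM : AEStronglyMeasurable[MeasurableSpace.comap Y m𝒪] (fun ω => g (Y ω)) P :=
    ⟨fun ω => g (Y ω), (hgmeas.comp hYm).stronglyMeasurable, EventuallyEq.rfl⟩
  haveI : SigmaFinite (P.trim hm) := inferInstance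
  have hcondexp : (fun ω => g (Y ω)) =ᵐ[P] P[F | MeasurableSpace.comap Y m𝒪] :=
    ae_eq_condExp_of_forall_setIntegral_eq hm hFint
      (fun s _ _ => hgYint.integrableOn) heq hAESM
  filter_upwards [hclaim1, hcondexp] with ω h1 h2
  rw [← h2]
  exact h1
end

section
/- Let E be a locally compact metric space, let (μ_n) be a sequence of Borel probability measures on E converging weakly to a Borel probability measure μ. Suppose φ : E → ℝ is continuous with φ > 0 everywhere and sup_n ∫_E φ dμ_n < ∞. Then for every continuous f : E → ℝ such that the function f/φ vanishes at infinity (f/φ ∈ C₀(E)), f is integrable with respect to each μ_n and with respect to μ, and lim_{n→∞} ∫_E f dμ_n = ∫_E f dμ. -/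
open MeasureTheory Filter Topology

lemma aux_integrable_of_dom {E : Type*} [MeasurableSpace E] [TopologicalSpace E]
    [OpensMeasurableSpace E]
    (ν : Measure E) (φ f : E → ℝ) (hφc : Continuous φ) (hφ0 : ∀ x, 0 ≤ φ x)
    (hfc : Continuous f) (M : ℝ) (hM : ∀ x, |f x| ≤ M * φ x)
    (C : ℝ) (hC0 : 0 ≤ C) (hν : ∫⁻ x, ENNReal.ofReal (φ x) ∂ν ≤ ENNReal.ofReal C) :
    Integrable φ ν ∧ Integrable f ν ∧ ∫ x, φ x ∂ν ≤ C := by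
  have hφm : AEStronglyMeasurable φ ν := hφc.aestronglyMeasurable
  have hφnn : 0 ≤ᵐ[ν] φ := Filter.Eventually.of_forall hφ0
  have hφint : Integrable φ ν := by
    refine ⟨hφm, ?_⟩
    rw [hasFiniteIntegral_iff_ofReal hφnn]
    exact lt_of_le_of_lt hν ENNReal.ofReal_lt_top
  have hfint : Integrable f ν := by
    refine Integrable.mono (hφint.const_mul M) hfc.aestronglyMeasurable ?_
    refine Filter.Eventually.of_forall fun x => ?_
    rw [Real.norm_eq_abs, Real.norm_eq_abs]
    exact (hM x).trans (le_abs_self _)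
  refine ⟨hφint, hfint, ?_⟩
  rw [integral_eq_lintegral_of_nonneg_ae hφnn hφm]
  exact ENNReal.toReal_le_of_le_ofReal hC0 hν

/-- Weak convergence plus a uniform bound on the integrals of a positive
continuous `φ` allows passing to the limit for integrals of any continuous `f`
with `f/φ` vanishing at infinity (Lemma `wkext`). -/
theorem weak_conv_integral_of_dominating
    {E : Type*} [MetricSpace E] [LocallyCompactSpace E]
    [MeasurableSpace E] [BorelSpace E]
    (μn : ℕ → ProbabilityMeasure E) (μ : ProbabilityMeasure E)
    (hconv : Tendsto μn atTop (𝓝 μ))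
    (φ : E → ℝ) (hφ_cont : Continuous φ) (hφ_pos : ∀ x, 0 < φ x)
    (hφ_bdd : ∃ C : ℝ, ∀ n, ∫⁻ x, ENNReal.ofReal (φ x) ∂(μn n : Measure E)
      ≤ ENNReal.ofReal C)
    (f : E → ℝ) (hf_cont : Continuous f)
    (hf_van : Tendsto (fun x => f x / φ x) (cocompact E) (𝓝 0)) :
    (∀ n, Integrable f (μn n : Measure E)) ∧ Integrable f (μ : Measure E) ∧
      Tendsto (fun n => ∫ x, f x ∂(μn n : Measure E)) atTop
        (𝓝 (∫ x, f x ∂(μ : Measure E))) := by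
  classical
  obtain ⟨C₀, hC₀⟩ := hφ_bdd
  set C : ℝ := max C₀ 0 with hCdef
  have hC0 : 0 ≤ C := le_max_right _ _
  have hC : ∀ n, ∫⁻ x, ENNReal.ofReal (φ x) ∂(μn n : Measure E) ≤ ENNReal.ofReal C :=
    fun n => (hC₀ n).trans (ENNReal.ofReal_le_ofReal (le_max_left _ _))
  have hφne : ∀ x, φ x ≠ 0 := fun x => (hφ_pos x).ne'
  have hφ0 : ∀ x, 0 ≤ φ x := fun x => (hφ_pos x).le
  have hquot : Continuous fun x => f x / φ x := hf_cont.div hφ_cont hφne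
  -- extracting a compact set outside which |f/φ| ≤ δ
  have hvan : ∀ δ : ℝ, 0 < δ → ∃ K : Set E, IsCompact K ∧ ∀ x ∉ K, |f x / φ x| ≤ δ := by
    intro δ hδ
    have hmem : (fun x => f x / φ x) ⁻¹' Metric.closedBall 0 δ ∈ cocompact E :=
      hf_van (Metric.closedBall_mem_nhds 0 hδ)
    obtain ⟨K, hK, hsub⟩ := hasBasis_cocompact.mem_iff.mp hmem
    refine ⟨K, hK, fun x hx => ?_⟩
    have := hsub hx
    simpa only [Set.mem_preimage, Metric.mem_closedBall, Real.dist_eq, sub_zero] using this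
  -- a global bound |f| ≤ M φ
  obtain ⟨K₁, hK₁, hK₁'⟩ := hvan 1 one_pos
  obtain ⟨M₀, hM₀⟩ := hK₁.exists_bound_of_continuousOn hquot.continuousOn
  set M : ℝ := max M₀ 1 with hMdef
  have hM : ∀ x, |f x| ≤ M * φ x := by
    intro x
    have hq : |f x / φ x| ≤ M := by
      by_cases hx : x ∈ K₁
      · exact le_trans (by simpa only [Real.norm_eq_abs] using hM₀ x hx) (le_max_left _ _)
      · exact le_trans (hK₁' x hx) (le_max_right _ _)
    have : |f x| = |f x / φ x| * φ x := by
      rw [abs_div, abs_of_pos (hφ_pos x), div_mul_cancel₀]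
      exact hφne x
    rw [this]
    exact mul_le_mul_of_nonneg_right hq (hφ0 x)
  -- integrability with respect to each μn
  have hnint := fun n =>
    aux_integrable_of_dom (μn n : Measure E) φ f hφ_cont hφ0 hf_cont M hM C hC0 (hC n)
  -- the bound ∫⁻ φ dμ ≤ C, via truncation and weak convergence
  have hμC : ∫⁻ x, ENNReal.ofReal (φ x) ∂(μ : Measure E) ≤ ENNReal.ofReal C := by
    have htr : ∀ k : ℕ,
        ∫⁻ x, ENNReal.ofReal (min (φ x) k) ∂(μ : Measure E) ≤ ENNReal.ofReal C := by
      intro k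
      have hgc : Continuous fun x => min (φ x) (k : ℝ) := hφ_cont.min continuous_const
      set g : BoundedContinuousFunction E ℝ :=
        BoundedContinuousFunction.ofNormedAddCommGroup (fun x => min (φ x) (k : ℝ)) hgc k
          (fun x => by
            rw [Real.norm_eq_abs, abs_of_nonneg (le_min (hφ0 x) k.cast_nonneg)]
            exact min_le_right _ _) with hg
      have hconv' := ProbabilityMeasure.tendsto_iff_forall_integral_tendsto.mp hconv g
      have hn : ∀ n, ∫ x, g x ∂(μn n : Measure E) ≤ C := by
        intro n
        have h1 : ∫ x, g x ∂(μn n : Measure E) ≤ ∫ x, φ x ∂(μn n : Measure E) := by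
          refine integral_mono (g.integrable _) (hnint n).1 fun x => ?_
          simp only [g, BoundedContinuousFunction.coe_ofNormedAddCommGroup]; exact min_le_left (φ x) (k : ℝ)
        exact h1.trans (hnint n).2.2
      have hlim : ∫ x, g x ∂(μ : Measure E) ≤ C :=
        le_of_tendsto hconv' (Filter.Eventually.of_forall hn)
      have hnn : 0 ≤ᵐ[(μ : Measure E)] fun x => g x :=
        Filter.Eventually.of_forall fun x => by
          exact le_min (hφ0 x) (Nat.cast_nonneg k)
      calc ∫⁻ x, ENNReal.ofReal (min (φ x) k) ∂(μ : Measure E)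
          = ENNReal.ofReal (∫ x, g x ∂(μ : Measure E)) := by
            rw [ofReal_integral_eq_lintegral_ofReal (g.integrable _) hnn]
            exact lintegral_congr fun x => rfl
        _ ≤ ENNReal.ofReal C := ENNReal.ofReal_le_ofReal hlim
    have hmono : Monotone fun (k : ℕ) (x : E) => ENNReal.ofReal (min (φ x) k) := by
      intro k j hkj x
      exact ENNReal.ofReal_le_ofReal (min_le_min le_rfl (by exact_mod_cast hkj))
    have hmeas : ∀ k : ℕ, Measurable fun x => ENNReal.ofReal (min (φ x) (k : ℝ)) :=
      fun k => ENNReal.measurable_ofReal.comp (hφ_cont.min continuous_const).measurable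
    have hpt : ∀ x, ENNReal.ofReal (φ x) = ⨆ k : ℕ, ENNReal.ofReal (min (φ x) k) := by
      intro x
      refine le_antisymm ?_ (iSup_le fun k => ENNReal.ofReal_le_ofReal (min_le_left _ _))
      refine le_iSup_of_le ⌈φ x⌉₊ ?_
      rw [min_eq_left (Nat.le_ceil _)]
    calc ∫⁻ x, ENNReal.ofReal (φ x) ∂(μ : Measure E)
        = ∫⁻ x, ⨆ k : ℕ, ENNReal.ofReal (min (φ x) k) ∂(μ : Measure E) := by
          simp_rw [← hpt]
      _ = ⨆ k : ℕ, ∫⁻ x, ENNReal.ofReal (min (φ x) k) ∂(μ : Measure E) :=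
          lintegral_iSup hmeas hmono
      _ ≤ ENNReal.ofReal C := iSup_le htr
  have hμint :=
    aux_integrable_of_dom (μ : Measure E) φ f hφ_cont hφ0 hf_cont M hM C hC0 hμC
  refine ⟨fun n => (hnint n).2.1, hμint.2.1, ?_⟩
  -- the limit
  rw [Metric.tendsto_atTop]
  intro ε hε
  set δ : ℝ := ε / (4 * (C + 1)) with hδdef
  have hCpos : (0 : ℝ) < C + 1 := by linarith
  have hδ : 0 < δ := div_pos hε (by linarith)
  have hδC : δ * C < ε / 4 := by
    have h1 : δ * (C + 1) = ε / 4 := by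
      field_simp [hδdef]
      have h4 := div_mul_cancel₀ ε (ne_of_gt (by linarith : (0:ℝ) < 4 * (C + 1)))
      rw [← hδdef] at h4
      linear_combination h4
    nlinarith
  obtain ⟨K, hK, hKb⟩ := hvan δ hδ
  obtain ⟨h, h_one, -, h_supp, h_mem⟩ :=
    exists_continuous_one_zero_of_isCompact hK isClosed_empty (Set.disjoint_empty _)
  set g : E → ℝ := fun x => f x * h x with hgdef
  have hg_cont : Continuous g := hf_cont.mul h.continuous
  have hg_supp : HasCompactSupport g := h_supp.mul_left
  obtain ⟨B, hB⟩ := hg_cont.bounded_above_of_compact_support hg_supp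
  set gb : BoundedContinuousFunction E ℝ :=
    BoundedContinuousFunction.ofNormedAddCommGroup g hg_cont B hB with hgb
  have hgtend := ProbabilityMeasure.tendsto_iff_forall_integral_tendsto.mp hconv gb
  -- the pointwise bound |f - g| ≤ δ φ
  have hbound : ∀ x, |f x - g x| ≤ δ * φ x := by
    intro x
    by_cases hx : x ∈ K
    · have : g x = f x := by simp [hgdef, h_one hx]
      rw [this, sub_self, abs_zero]
      exact mul_nonneg hδ.le (hφ0 x)
    · have h1 : |f x| ≤ δ * φ x := by
        have hq : |f x / φ x| ≤ δ := hKb x hx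
        have : |f x| = |f x / φ x| * φ x := by
          rw [abs_div, abs_of_pos (hφ_pos x), div_mul_cancel₀]
          exact hφne x
        rw [this]
        exact mul_le_mul_of_nonneg_right hq (hφ0 x)
      have h2 : |f x - g x| = |f x| * |1 - h x| := by
        rw [hgdef]
        rw [show f x - f x * h x = f x * (1 - h x) by ring, abs_mul]
      have h3 : |1 - h x| ≤ 1 := by
        rcases h_mem x with ⟨h0, h1'⟩
        rw [abs_of_nonneg (by linarith)]
        linarith
      calc |f x - g x| = |f x| * |1 - h x| := h2
        _ ≤ |f x| * 1 := mul_le_mul_of_nonneg_left h3 (abs_nonneg _)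
        _ = |f x| := mul_one _
        _ ≤ δ * φ x := h1
  -- the integral bound for any of our measures
  have hkey : ∀ ν : Measure E, IsProbabilityMeasure ν → Integrable f ν → Integrable φ ν →
      (∫ x, φ x ∂ν ≤ C) → |∫ x, f x ∂ν - ∫ x, gb x ∂ν| ≤ δ * C := by
    intro ν hνp hfi hφi hφC
    have hgi : Integrable (fun x => gb x) ν := gb.integrable ν
    rw [← integral_sub hfi hgi]
    calc |∫ x, (f x - gb x) ∂ν| ≤ ∫ x, |f x - gb x| ∂ν := by
          simpa [Real.norm_eq_abs] using norm_integral_le_integral_norm fun x => f x - gb x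
      _ ≤ ∫ x, δ * φ x ∂ν := by
          refine integral_mono (hfi.sub hgi).abs (hφi.const_mul δ) fun x => ?_
          simpa [gb, g] using hbound x
      _ = δ * ∫ x, φ x ∂ν := integral_const_mul δ φ
      _ ≤ δ * C := mul_le_mul_of_nonneg_left hφC hδ.le
  obtain ⟨N, hN⟩ := (Metric.tendsto_atTop.mp hgtend) (ε / 4) (by linarith)
  refine ⟨N, fun n hn => ?_⟩
  have h1 := hkey (μn n : Measure E) inferInstance (hnint n).2.1 (hnint n).1 (hnint n).2.2
  have h2 := hkey (μ : Measure E) inferInstance hμint.2.1 hμint.1 hμint.2.2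
  have h3 := hN n hn
  rw [Real.dist_eq] at h3 ⊢
  have : ∫ x, f x ∂(μn n : Measure E) - ∫ x, f x ∂(μ : Measure E) =
      (∫ x, f x ∂(μn n : Measure E) - ∫ x, gb x ∂(μn n : Measure E)) +
      (∫ x, gb x ∂(μn n : Measure E) - ∫ x, gb x ∂(μ : Measure E)) +
      (∫ x, gb x ∂(μ : Measure E) - ∫ x, f x ∂(μ : Measure E)) := by ring
  rw [this]
  calc |_ + _ + _| ≤ |∫ x, f x ∂(μn n : Measure E) - ∫ x, gb x ∂(μn n : Measure E)| +
        |∫ x, gb x ∂(μn n : Measure E) - ∫ x, gb x ∂(μ : Measure E)| +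
        |∫ x, gb x ∂(μ : Measure E) - ∫ x, f x ∂(μ : Measure E)| :=
        (abs_add_le _ _).trans (add_le_add_left (abs_add_le _ _) _)
    _ < ε := by
        rw [abs_sub_comm (∫ x, gb x ∂(μ : Measure E))]
        linarith
end

section
/- Let E be a locally compact separable metric space and let 𝒫(E) denote the Borel probability measures on E with the topology of weak convergence. Let z_n, z : [0,∞) → 𝒫(E) be continuous maps such that z_n → z uniformly on compact subsets of [0,∞). Suppose that for each T = 1, 2, … there exists a continuous φ_T : E → ℝ with φ_T > 0 everywhere and sup_n sup_{0 ≤ t ≤ T} ∫_E φ_T(u) z_n(t)(du) < ∞. Let f : E → ℝ be continuous such that f/φ_T vanishes at infinity for every T. Then for every n the map y_n(t) = ∫_E f(u) z_n(t)(du) is a well-defined real-valued function of t, the map y(t) = ∫_E f(u) z(t)(du) is well defined, and y_n → y uniformly on compact subsets of [0,∞). -/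
open MeasureTheory Filter Topology
open scoped ENNReal NNReal

section Helpers

variable {E : Type*} [MetricSpace E]

omit [MetricSpace E] in
lemma ratio_bound' [TopologicalSpace E] {f φ : E → ℝ} (hf : Continuous f) (hφ : Continuous φ)
    (hφpos : ∀ x, 0 < φ x) (hvan : Tendsto (fun x => f x / φ x) (cocompact E) (𝓝 0)) :
    ∃ M : ℝ, 0 ≤ M ∧ ∀ x, |f x| ≤ M * φ x := by
  have h1 : ∀ᶠ x in cocompact E, dist (f x / φ x) 0 < 1 :=
    (Metric.tendsto_nhds.mp hvan) 1 one_pos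
  obtain ⟨K, hK, hKsub⟩ := mem_cocompact.mp h1
  obtain ⟨C, hC⟩ := hK.exists_bound_of_continuousOn
    ((hf.div hφ (fun x => (hφpos x).ne')).continuousOn)
  refine ⟨max C 1, le_trans zero_le_one (le_max_right _ _), fun x => ?_⟩
  have key : |f x / φ x| ≤ max C 1 := by
    by_cases hx : x ∈ K
    · exact le_trans (hC x hx) (le_max_left _ _)
    · have := hKsub hx
      simp only [Set.mem_setOf_eq, Real.dist_eq, sub_zero] at this
      exact le_trans this.le (le_max_right _ _)
  have hφx := hφpos x
  have : |f x| = |f x / φ x| * φ x := by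
    rw [abs_div, abs_of_pos hφx]
    field_simp
  rw [this]
  exact mul_le_mul_of_nonneg_right key hφx.le

variable [MeasurableSpace E] [OpensMeasurableSpace E]

lemma integrable_of_dom' {f φ : E → ℝ} (hf : Continuous f) {M C : ℝ} (hM : 0 ≤ M)
    (hdom : ∀ x, |f x| ≤ M * φ x) (μ : Measure E) [IsFiniteMeasure μ]
    (hint : ∫⁻ x, ENNReal.ofReal (φ x) ∂μ ≤ ENNReal.ofReal C) :
    Integrable f μ := by
  refine ⟨hf.aestronglyMeasurable, ?_⟩
  rw [hasFiniteIntegral_iff_norm]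
  calc ∫⁻ x, ENNReal.ofReal ‖f x‖ ∂μ
      ≤ ∫⁻ x, ENNReal.ofReal M * ENNReal.ofReal (φ x) ∂μ := by
        refine lintegral_mono fun x => ?_
        rw [← ENNReal.ofReal_mul hM]
        exact ENNReal.ofReal_le_ofReal ((Real.norm_eq_abs _ ▸ hdom x))
    _ = ENNReal.ofReal M * ∫⁻ x, ENNReal.ofReal (φ x) ∂μ := lintegral_const_mul' _ _
        ENNReal.ofReal_ne_top
    _ ≤ ENNReal.ofReal M * ENNReal.ofReal C := by gcongr
    _ < ⊤ := ENNReal.mul_lt_top ENNReal.ofReal_lt_top ENNReal.ofReal_lt_top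

noncomputable def truncBCF' {φ : E → ℝ} (hφc : Continuous φ) (k : ℕ) :
    BoundedContinuousFunction E ℝ≥0 where
  toFun := fun x => Real.toNNReal (min (φ x) k)
  continuous_toFun := continuous_real_toNNReal.comp (hφc.min continuous_const)
  map_bounded' := by
    refine ⟨k, fun x y => ?_⟩
    have h1 : ∀ u : E, ((min (φ u) k).toNNReal : ℝ) ≤ k := by
      intro u
      rw [Real.coe_toNNReal']
      exact max_le (min_le_right _ _) (Nat.cast_nonneg k)
    have h0 : ∀ u : E, (0:ℝ) ≤ ((min (φ u) k).toNNReal : ℝ) := fun u => ((min (φ u) k).toNNReal).2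
    rw [NNReal.dist_eq, abs_sub_le_iff]
    constructor <;> nlinarith [h1 x, h1 y, h0 x, h0 y]

omit [MeasurableSpace E] [OpensMeasurableSpace E] in
lemma truncBCF'_coe {φ : E → ℝ} (hφc : Continuous φ) (k : ℕ) (x : E) :
    ((truncBCF' hφc k x : ℝ≥0) : ℝ≥0∞) = ENNReal.ofReal (min (φ x) k) := rfl

lemma lintegral_le_of_tendsto_PM' {μs : ℕ → ProbabilityMeasure E} {ν : ProbabilityMeasure E}
    (h : Tendsto μs atTop (𝓝 ν)) {φ : E → ℝ} (hφc : Continuous φ)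
    {C : ℝ} (hb : ∀ n, ∫⁻ x, ENNReal.ofReal (φ x) ∂(μs n : Measure E) ≤ ENNReal.ofReal C) :
    ∫⁻ x, ENNReal.ofReal (φ x) ∂(ν : Measure E) ≤ ENNReal.ofReal C := by
  have key : ∀ k : ℕ, ∫⁻ x, ENNReal.ofReal (min (φ x) k) ∂(ν : Measure E)
      ≤ ENNReal.ofReal C := by
    intro k
    have htend := (ProbabilityMeasure.tendsto_iff_forall_lintegral_tendsto.mp h) (truncBCF' hφc k)
    simp only [truncBCF'_coe] at htend
    refine le_of_tendsto htend (Eventually.of_forall fun n => ?_)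
    refine le_trans (lintegral_mono fun x => ?_) (hb n)
    exact ENNReal.ofReal_le_ofReal (min_le_left _ _)
  have heq : ∀ x, ENNReal.ofReal (φ x) = ⨆ k : ℕ, ENNReal.ofReal (min (φ x) k) := by
    intro x
    refine le_antisymm ?_ (iSup_le fun k => ENNReal.ofReal_le_ofReal (min_le_left _ _))
    refine le_trans (le_of_eq ?_) (le_iSup _ ⌈φ x⌉₊)
    rw [min_eq_left (Nat.le_ceil _)]
  calc ∫⁻ x, ENNReal.ofReal (φ x) ∂(ν : Measure E)
      = ∫⁻ x, ⨆ k : ℕ, ENNReal.ofReal (min (φ x) k) ∂(ν : Measure E) := by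
        simp_rw [heq]
    _ = ⨆ k : ℕ, ∫⁻ x, ENNReal.ofReal (min (φ x) k) ∂(ν : Measure E) := by
        refine lintegral_iSup (fun k => ?_) (fun i j hij x => ?_)
        · exact (ENNReal.continuous_ofReal.comp (hφc.min continuous_const)).measurable
        · exact ENNReal.ofReal_le_ofReal (min_le_min le_rfl (Nat.cast_le.mpr hij))
    _ ≤ ENNReal.ofReal C := iSup_le key

omit [MeasurableSpace E] [OpensMeasurableSpace E] in
lemma exists_trunc_bcf' {f φ : E → ℝ} (hf : Continuous f)
    (hφpos : ∀ x, 0 < φ x) (hvan : Tendsto (fun x => f x / φ x) (cocompact E) (𝓝 0))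
    {δ : ℝ} (hδ : 0 < δ) :
    ∃ g : BoundedContinuousFunction E ℝ, ∀ x, |f x - g x| ≤ δ * φ x := by
  have h1 : ∀ᶠ x in cocompact E, dist (f x / φ x) 0 < δ :=
    (Metric.tendsto_nhds.mp hvan) δ hδ
  obtain ⟨K, hK, hKsub⟩ := mem_cocompact.mp h1
  obtain ⟨B₀, hB₀⟩ := hK.exists_bound_of_continuousOn hf.continuousOn
  set B := max B₀ 0 with hB
  have hB0 : 0 ≤ B := le_max_right _ _
  have hKB : ∀ x ∈ K, |f x| ≤ B := fun x hx => le_trans (hB₀ x hx) (le_max_left _ _)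
  have houtside : ∀ x, x ∉ K → |f x| ≤ δ * φ x := by
    intro x hx
    have h2 := hKsub hx
    simp only [Set.mem_setOf_eq, Real.dist_eq, sub_zero] at h2
    have hφx := hφpos x
    have : |f x| = |f x / φ x| * φ x := by
      rw [abs_div, abs_of_pos hφx]; field_simp
    rw [this]
    exact mul_le_mul_of_nonneg_right h2.le hφx.le
  set g : E → ℝ := fun x => max (-B) (min (f x) B) with hg
  have hgc : Continuous g := continuous_const.max (hf.min continuous_const)
  have hgbd : ∀ x, ‖g x‖ ≤ B := by
    intro x
    rw [Real.norm_eq_abs, abs_le]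
    exact ⟨le_max_left _ _, max_le (by linarith) (min_le_right _ _)⟩
  have hdiff : ∀ x, |f x - g x| ≤ δ * φ x := by
    intro x
    by_cases hfx : |f x| ≤ B
    · have : g x = f x := by
        rw [abs_le] at hfx
        simp only [hg, min_eq_left hfx.2, max_eq_right hfx.1]
      rw [this, sub_self, abs_zero]
      exact mul_nonneg hδ.le (hφpos x).le
    · push_neg at hfx
      have hxK : x ∉ K := fun hx => absurd (hKB x hx) (not_le.mpr hfx)
      refine le_trans ?_ (houtside x hxK)
      have habs := abs_nonneg (f x)
      rcases le_total (f x) B with h | h <;> rcases le_total (-B) (f x) with h' | h' <;>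
        simp only [hg, min_eq_left h, min_eq_right h, max_eq_right h', max_eq_left h',
          max_eq_right (neg_le_self hB0)] <;>
        rw [abs_le] <;> constructor <;>
        cases' abs_le.mp (le_refl |f x|) with hl hr <;>
        nlinarith [le_abs_self (f x), neg_abs_le (f x)]
  exact ⟨BoundedContinuousFunction.ofNormedAddCommGroup g hgc B hgbd, hdiff⟩

lemma integral_diff_le' {f : E → ℝ} (hf : Continuous f) (g : BoundedContinuousFunction E ℝ)
    {φ : E → ℝ} {δ C₀ : ℝ} (hδ : 0 ≤ δ) (hC : 0 ≤ C₀)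
    (hdom : ∀ x, |f x - g x| ≤ δ * φ x)
    (μ : Measure E) [IsProbabilityMeasure μ]
    (hfi : Integrable f μ) (hφb : ∫⁻ x, ENNReal.ofReal (φ x) ∂μ ≤ ENNReal.ofReal C₀) :
    |∫ x, f x ∂μ - ∫ x, g x ∂μ| ≤ δ * C₀ := by
  have hgi : Integrable (fun x => g x) μ := g.integrable μ
  rw [← integral_sub hfi hgi]
  have h1 : |∫ x, f x - g x ∂μ| ≤ ∫ x, |f x - g x| ∂μ := by
    simpa [Real.norm_eq_abs] using
      norm_integral_le_integral_norm (f := fun x => f x - g x) (μ := μ)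
  refine le_trans h1 ?_
  have hmeas : AEStronglyMeasurable (fun x => |f x - g x|) μ :=
    ((hf.sub g.continuous).abs).aestronglyMeasurable
  rw [integral_eq_lintegral_of_nonneg_ae (Eventually.of_forall fun x => abs_nonneg _) hmeas]
  have h2 : ∫⁻ x, ENNReal.ofReal (|f x - g x|) ∂μ ≤ ENNReal.ofReal (δ * C₀) := by
    calc ∫⁻ x, ENNReal.ofReal (|f x - g x|) ∂μ
        ≤ ∫⁻ x, ENNReal.ofReal δ * ENNReal.ofReal (φ x) ∂μ := by
          refine lintegral_mono fun x => ?_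
          rw [← ENNReal.ofReal_mul hδ]
          exact ENNReal.ofReal_le_ofReal (hdom x)
      _ = ENNReal.ofReal δ * ∫⁻ x, ENNReal.ofReal (φ x) ∂μ :=
          lintegral_const_mul' _ _ ENNReal.ofReal_ne_top
      _ ≤ ENNReal.ofReal δ * ENNReal.ofReal C₀ := by gcongr
      _ = ENNReal.ofReal (δ * C₀) := (ENNReal.ofReal_mul hδ).symm
  exact ENNReal.toReal_le_of_le_ofReal (by positivity) h2

variable [TopologicalSpace.SeparableSpace E]

lemma tendsto_of_LP' {ι : Type*} {l : Filter ι} {μs : ι → ProbabilityMeasure E}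
    {ν : ProbabilityMeasure E}
    (h : Tendsto (fun i => levyProkhorovDist (μs i : Measure E) (ν : Measure E)) l (𝓝 0)) :
    Tendsto μs l (𝓝 ν) := by
  set Φ := LevyProkhorov.probabilityMeasureHomeomorph (Ω := E) with hΦ
  have h1 : Tendsto (fun i => Φ (μs i)) l (𝓝 (Φ ν)) := by
    rw [tendsto_iff_dist_tendsto_zero]
    exact h
  have h2 := (Φ.symm.continuous.tendsto (Φ ν)).comp h1
  simpa [Function.comp_def] using h2

lemma LP_nonneg' (μ ν : ProbabilityMeasure E) :
    0 ≤ levyProkhorovDist (μ : Measure E) (ν : Measure E) :=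
  (dist_nonneg :
    (0:ℝ) ≤ dist (LevyProkhorov.probabilityMeasureHomeomorph (Ω := E) μ)
      (LevyProkhorov.probabilityMeasureHomeomorph (Ω := E) ν))

lemma unif_bcf' {zn : ℕ → NNReal → ProbabilityMeasure E} {z : NNReal → ProbabilityMeasure E}
    (hz_cont : Continuous z)
    (hunif : ∀ T : NNReal, ∀ ε > (0 : ℝ), ∃ N : ℕ, ∀ n ≥ N, ∀ t ≤ T,
      levyProkhorovDist (zn n t : Measure E) (z t : Measure E) < ε)
    (g : BoundedContinuousFunction E ℝ) (T : NNReal) :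
    TendstoUniformlyOn (fun n t => ∫ x, g x ∂(zn n t : Measure E))
      (fun t => ∫ x, g x ∂(z t : Measure E)) atTop (Set.Icc 0 T) := by
  set Φ := LevyProkhorov.probabilityMeasureHomeomorph (Ω := E) with hΦdef
  have hΦeq : ∀ (μ ν : ProbabilityMeasure E),
      levyProkhorovDist (μ : Measure E) (ν : Measure E) = dist (Φ μ) (Φ ν) := fun _ _ => rfl
  rw [Metric.tendstoUniformlyOn_iff]
  by_contra hcon
  push_neg at hcon
  obtain ⟨ε, hε, hfreq⟩ := hcon
  obtain ⟨ns, hns, hP⟩ := Filter.extraction_of_frequently_atTop hfreq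
  choose t ht hdist using hP
  obtain ⟨tl, htl, ψ, hψ, htt⟩ := (isCompact_Icc (a := (0:NNReal)) (b := T)).tendsto_subseq ht
  set m : ℕ → ℕ := fun k => ns (ψ k) with hm
  set s : ℕ → NNReal := fun k => t (ψ k) with hs
  have hb : Tendsto (fun k => dist (Φ (z (s k))) (Φ (z tl))) atTop (𝓝 0) := by
    have hcont : Tendsto (fun k => Φ (z (s k))) atTop (𝓝 (Φ (z tl))) :=
      ((Φ.continuous.comp hz_cont).tendsto tl).comp htt
    exact tendsto_iff_dist_tendsto_zero.mp hcont
  have ha : Tendsto (fun k => dist (Φ (zn (m k) (s k))) (Φ (z (s k)))) atTop (𝓝 0) := by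
    rw [Metric.tendsto_atTop]
    intro ε' hε'
    obtain ⟨N, hN⟩ := hunif T ε' hε'
    refine ⟨N, fun k hk => ?_⟩
    have hmk : N ≤ m k := le_trans hk (le_trans (hψ.le_apply) (hns.le_apply))
    have := hN (m k) hmk (s k) (ht (ψ k)).2
    rw [hΦeq] at this
    rw [Real.dist_eq, sub_zero, abs_of_nonneg dist_nonneg]
    exact this
  have hd : Tendsto (fun k => dist (Φ (zn (m k) (s k))) (Φ (z tl))) atTop (𝓝 0) := by
    have hsum := ha.add hb
    rw [add_zero] at hsum
    exact squeeze_zero (fun k => dist_nonneg) (fun k => dist_triangle _ _ _) hsum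
  have hweak : Tendsto (fun k => zn (m k) (s k)) atTop (𝓝 (z tl)) := by
    refine tendsto_of_LP' ?_
    simpa only [hΦeq] using hd
  have hInt1 : Tendsto (fun k => ∫ x, g x ∂(zn (m k) (s k) : Measure E)) atTop
      (𝓝 (∫ x, g x ∂(z tl : Measure E))) :=
    ProbabilityMeasure.tendsto_iff_forall_integral_tendsto.mp hweak g
  have hInt2 : Tendsto (fun k => ∫ x, g x ∂(z (s k) : Measure E)) atTop
      (𝓝 (∫ x, g x ∂(z tl : Measure E))) := by
    have hc := MeasureTheory.ProbabilityMeasure.continuous_integral_boundedContinuousFunction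
      (X := E) g
    exact ((hc.comp hz_cont).tendsto tl).comp htt
  have hdd : Tendsto (fun k => dist (∫ x, g x ∂(z (s k) : Measure E))
      (∫ x, g x ∂(zn (m k) (s k) : Measure E))) atTop (𝓝 0) := by
    have := hInt2.dist hInt1
    simpa using this
  have hge : (ε : ℝ) ≤ 0 :=
    ge_of_tendsto hdd (Eventually.of_forall fun k => hdist (ψ k))
  linarith

end Helpers

/-- If measure-valued paths `z_n` converge to `z` uniformly on compact time sets
(in the Lévy–Prokhorov metric metrizing weak convergence), with a uniform-in-`n`,
locally-uniform-in-`t` bound on the integrals of positive continuous functions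
`φ_T`, then for any continuous `f` with `f/φ_T` vanishing at infinity for every
`T`, the integrals `y_n(t) = ∫ f dz_n(t)` are well defined and converge to
`y(t) = ∫ f dz(t)` uniformly on compact time sets (Lemma `imgcnv`). -/
theorem conv_integral_measure_paths
    {E : Type*} [MetricSpace E] [LocallyCompactSpace E]
    [TopologicalSpace.SeparableSpace E] [MeasurableSpace E] [BorelSpace E]
    (zn : ℕ → NNReal → ProbabilityMeasure E) (z : NNReal → ProbabilityMeasure E)
    (hzn_cont : ∀ n, Continuous (zn n)) (hz_cont : Continuous z)
    (hunif : ∀ T : NNReal, ∀ ε > (0 : ℝ), ∃ N : ℕ, ∀ n ≥ N, ∀ t ≤ T,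
      levyProkhorovDist (zn n t : Measure E) (z t : Measure E) < ε)
    (φ : ℕ → E → ℝ) (hφ_cont : ∀ T, Continuous (φ T)) (hφ_pos : ∀ T x, 0 < φ T x)
    (hφ_bdd : ∀ T : ℕ, ∃ C : ℝ, ∀ n : ℕ, ∀ t : NNReal, t ≤ (T : NNReal) →
      ∫⁻ x, ENNReal.ofReal (φ T x) ∂(zn n t : Measure E) ≤ ENNReal.ofReal C)
    (f : E → ℝ) (hf_cont : Continuous f)
    (hf_van : ∀ T : ℕ, Tendsto (fun x => f x / φ T x) (cocompact E) (𝓝 0)) :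
    (∀ n t, Integrable f (zn n t : Measure E)) ∧
      (∀ t, Integrable f (z t : Measure E)) ∧
      TendstoLocallyUniformly (fun n t => ∫ x, f x ∂(zn n t : Measure E))
        (fun t => ∫ x, f x ∂(z t : Measure E)) atTop := by
  -- pointwise weak convergence
  have hpt : ∀ t : NNReal, Tendsto (fun n => zn n t) atTop (𝓝 (z t)) := by
    intro t
    refine tendsto_of_LP' ?_
    rw [Metric.tendsto_atTop]
    intro ε hε
    obtain ⟨N, hN⟩ := hunif t ε hε
    refine ⟨N, fun n hn => ?_⟩
    rw [Real.dist_eq, sub_zero, abs_of_nonneg (LP_nonneg' _ _)]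
    exact hN n hn t le_rfl
  choose C hC using hφ_bdd
  set C₀ : ℕ → ℝ := fun T => max (C T) 0 with hC₀def
  have hC₀0 : ∀ T, 0 ≤ C₀ T := fun T => le_max_right _ _
  have hznb : ∀ T : ℕ, ∀ n : ℕ, ∀ t : NNReal, t ≤ (T : NNReal) →
      ∫⁻ x, ENNReal.ofReal (φ T x) ∂(zn n t : Measure E) ≤ ENNReal.ofReal (C₀ T) :=
    fun T n t ht => le_trans (hC T n t ht) (ENNReal.ofReal_le_ofReal (le_max_left _ _))
  have hzb : ∀ T : ℕ, ∀ t : NNReal, t ≤ (T : NNReal) →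
      ∫⁻ x, ENNReal.ofReal (φ T x) ∂(z t : Measure E) ≤ ENNReal.ofReal (C₀ T) :=
    fun T t ht => lintegral_le_of_tendsto_PM' (hpt t) (hφ_cont T) (fun n => hznb T n t ht)
  obtain hM := fun T => ratio_bound' hf_cont (hφ_cont T) (hφ_pos T) (hf_van T)
  choose M hM0 hMle using hM
  have hceil : ∀ t : NNReal, t ≤ ((⌈(t : ℝ)⌉₊ : ℕ) : NNReal) := by
    intro t
    rw [← NNReal.coe_le_coe]
    push_cast
    exact Nat.le_ceil _
  have hIzn : ∀ n t, Integrable f (zn n t : Measure E) := fun n t =>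
    integrable_of_dom' hf_cont (hM0 ⌈(t : ℝ)⌉₊) (hMle ⌈(t : ℝ)⌉₊) _
      (hznb ⌈(t : ℝ)⌉₊ n t (hceil t))
  have hIz : ∀ t, Integrable f (z t : Measure E) := fun t =>
    integrable_of_dom' hf_cont (hM0 ⌈(t : ℝ)⌉₊) (hMle ⌈(t : ℝ)⌉₊) _
      (hzb ⌈(t : ℝ)⌉₊ t (hceil t))
  refine ⟨hIzn, hIz, ?_⟩
  rw [tendstoLocallyUniformly_iff_forall_isCompact]
  intro K hK
  obtain ⟨b, hb⟩ := hK.bddAbove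
  set T : ℕ := ⌈(b : ℝ)⌉₊ with hT
  have hKsub : K ⊆ Set.Icc 0 (T : NNReal) := fun x hx =>
    ⟨zero_le, le_trans (hb hx) (hceil b)⟩
  refine TendstoUniformlyOn.mono ?_ hKsub
  rw [Metric.tendstoUniformlyOn_iff]
  intro ε hε
  set δ : ℝ := ε / (4 * (C₀ T + 1)) with hδdef
  have h4pos : (0:ℝ) < 4 * (C₀ T + 1) := by nlinarith [hC₀0 T]
  have hδpos : 0 < δ := div_pos hε h4pos
  obtain ⟨g, hg⟩ := exists_trunc_bcf' hf_cont (hφ_pos T) (hf_van T) hδpos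
  have hδC : δ * C₀ T ≤ ε / 4 := by
    calc δ * C₀ T ≤ δ * (C₀ T + 1) := by nlinarith
      _ = ε / 4 := by
          rw [hδdef]
          field_simp
          exact div_self (by linarith [hC₀0 T])
  have hU := unif_bcf' hz_cont hunif g (T : NNReal)
  rw [Metric.tendstoUniformlyOn_iff] at hU
  filter_upwards [hU (ε / 2) (by linarith)] with n hn
  intro t ht
  have htT : t ≤ (T : NNReal) := ht.2
  have h1 : |(∫ x, f x ∂(z t : Measure E)) - ∫ x, g x ∂(z t : Measure E)| ≤ δ * C₀ T :=
    integral_diff_le' hf_cont g hδpos.le (hC₀0 T) hg _ (hIz t) (hzb T t htT)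
  have h2 : |(∫ x, f x ∂(zn n t : Measure E)) - ∫ x, g x ∂(zn n t : Measure E)| ≤ δ * C₀ T :=
    integral_diff_le' hf_cont g hδpos.le (hC₀0 T) hg _ (hIzn n t) (hznb T n t htT)
  have h3 := hn t ht
  rw [Real.dist_eq] at h3 ⊢
  have key : |(∫ x, f x ∂(z t : Measure E)) - ∫ x, f x ∂(zn n t : Measure E)|
      ≤ |(∫ x, f x ∂(z t : Measure E)) - ∫ x, g x ∂(z t : Measure E)|
        + |(∫ x, g x ∂(z t : Measure E)) - ∫ x, g x ∂(zn n t : Measure E)|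
        + |(∫ x, g x ∂(zn n t : Measure E)) - ∫ x, f x ∂(zn n t : Measure E)| := by
    calc |(∫ x, f x ∂(z t : Measure E)) - ∫ x, f x ∂(zn n t : Measure E)|
        ≤ |(∫ x, f x ∂(z t : Measure E)) - ∫ x, g x ∂(zn n t : Measure E)|
          + |(∫ x, g x ∂(zn n t : Measure E)) - ∫ x, f x ∂(zn n t : Measure E)| :=
          abs_sub_le _ _ _
      _ ≤ |(∫ x, f x ∂(z t : Measure E)) - ∫ x, g x ∂(z t : Measure E)|
          + |(∫ x, g x ∂(z t : Measure E)) - ∫ x, g x ∂(zn n t : Measure E)|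
          + |(∫ x, g x ∂(zn n t : Measure E)) - ∫ x, f x ∂(zn n t : Measure E)| := by
          have := abs_sub_le (∫ x, f x ∂(z t : Measure E)) (∫ x, g x ∂(z t : Measure E))
            (∫ x, g x ∂(zn n t : Measure E))
          linarith
  have h2' : |(∫ x, g x ∂(zn n t : Measure E)) - ∫ x, f x ∂(zn n t : Measure E)| ≤ δ * C₀ T := by
    rw [abs_sub_comm]; exact h2
  linarith
end
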